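/- arXiv:1104.3507 — 7 statements merged into one kernel-verified Lean document; each statement's English description precedes it below -/
import Mathlib

section
/- Let n ≥ 1 and let A, B be maximal abelian self-adjoint subalgebras (masas) of the algebra M_n(ℂ) of n×n complex matrices, i.e., commutative *-subalgebras each equal to its own centralizer in M_n(ℂ). If A and B are orthogonal with respect to the normalized trace, meaning tr_n(ab) = tr_n(a)·tr_n(b) for all a ∈ A and b ∈ B, then the linear span of {ab : a ∈ A, b ∈ B} is all of M_n(ℂ). -/
open scoped Matrix

/-- The normalized trace on `n × n` complex matrices. -/
noncomputable def normTrace (n : ℕ) (M : Matrix (Fin n) (Fin n) ℂ) : ℂ :=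
  (n : ℂ)⁻¹ * Matrix.trace M

section Aux

variable {n : ℕ}

private lemma toE_mul (M N : Matrix (Fin n) (Fin n) ℂ) :
    Matrix.toEuclideanLin (M * N) = Matrix.toEuclideanLin M * Matrix.toEuclideanLin N := by
  ext x
  simp [Matrix.toEuclideanLin_apply, Matrix.mulVec_mulVec, Module.End.mul_apply]

/-- A masa in `M_n(ℂ)` contains `n` pairwise orthogonal idempotents of trace one. -/
private lemma masa_exists_idem (n : ℕ) (A : StarSubalgebra ℂ (Matrix (Fin n) (Fin n) ℂ))
    (hA_masa : (A : Set (Matrix (Fin n) (Fin n) ℂ)) =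
      Set.centralizer (A : Set (Matrix (Fin n) (Fin n) ℂ))) :
    ∃ p : Fin n → Matrix (Fin n) (Fin n) ℂ,
      (∀ i, p i ∈ A) ∧ (∀ i j, p i * p j = if i = j then p i else 0) ∧
      (∀ i, Matrix.trace (p i) = 1) := by
  classical
  -- The commuting family of all Hermitian elements of `A`, as symmetric operators.
  set E := EuclideanSpace ℂ (Fin n) with hE
  set ι := {a : Matrix (Fin n) (Fin n) ℂ // a ∈ A ∧ a.IsHermitian} with hι
  set T : ι → Module.End ℂ E := fun a => Matrix.toEuclideanLin a.1 with hT
  have hTsymm : ∀ i : ι, (T i).IsSymmetric := fun i =>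
    Matrix.isHermitian_iff_isSymmetric.mp i.2.2
  have hAcomm : ∀ a ∈ A, ∀ a' ∈ A, a * a' = a' * a := by
    intro a ha a' ha'
    have : a' ∈ Set.centralizer (A : Set (Matrix (Fin n) (Fin n) ℂ)) := by
      rw [← hA_masa]; exact ha'
    exact this a ha
  have hTcomm : Pairwise (Function.onFun Commute T) := by
    intro i j _
    show T i * T j = T j * T i
    rw [hT]
    simp only
    rw [← toE_mul, ← toE_mul, hAcomm i.1 i.2.1 j.1 j.2.1]
  -- joint eigenspace decomposition
  have hint :
      DirectSum.IsInternal fun χ : ι → ℂ => ⨅ i, Module.End.eigenspace (T i) (χ i) :=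
    LinearMap.IsSymmetric.LinearMap.IsSymmetric.directSum_isInternal_of_pairwise_commute
      hTsymm hTcomm
  set V : (ι → ℂ) → Submodule ℂ E := fun χ => ⨅ i, Module.End.eigenspace (T i) (χ i) with hV
  set bV : ∀ χ : ι → ℂ, Module.Basis (Fin (Module.finrank ℂ (V χ))) ℂ (V χ) := fun χ =>
    Module.finBasis ℂ (V χ) with hbV
  set b : Module.Basis ((χ : ι → ℂ) × Fin (Module.finrank ℂ (V χ))) ℂ E :=
    hint.collectedBasis bV with hb
  haveI : Fintype ((χ : ι → ℂ) × Fin (Module.finrank ℂ (V χ))) :=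
    FiniteDimensional.fintypeBasisIndex b
  have hcard : Fintype.card ((χ : ι → ℂ) × Fin (Module.finrank ℂ (V χ))) = n := by
    rw [← Module.finrank_eq_card_basis b]
    exact (finrank_euclideanSpace (𝕜 := ℂ) (ι := Fin n)).trans (Fintype.card_fin n)
  -- each basis vector is a joint eigenvector of all Hermitian elements of `A`
  have hherm : ∀ (x : ι) (s : (χ : ι → ℂ) × Fin (Module.finrank ℂ (V χ))),
      Matrix.toEuclideanLin x.1 (b s) = s.1 x • b s := by
    intro x s
    have hmem : b s ∈ V s.1 := hint.collectedBasis_mem bV s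
    have h2 : b s ∈ Module.End.eigenspace (T x) (s.1 x) :=
      (Submodule.mem_iInf _).mp hmem x
    exact Module.End.mem_eigenspace_iff.mp h2
  -- hence a joint eigenvector of every element of `A`
  have heig : ∀ a ∈ A, ∀ s : (χ : ι → ℂ) × Fin (Module.finrank ℂ (V χ)),
      ∃ c : ℂ, Matrix.toEuclideanLin a (b s) = c • b s := by
    intro a ha s
    set h₁ : Matrix (Fin n) (Fin n) ℂ := ((1 : ℂ)/2) • (a + star a) with hh₁
    set h₂ : Matrix (Fin n) (Fin n) ℂ := (-(Complex.I)/2) • (a - star a) with hh₂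
    have hstar : star a ∈ A := star_mem ha
    have hmem₁ : h₁ ∈ A := SMulMemClass.smul_mem _ (add_mem ha hstar)
    have hmem₂ : h₂ ∈ A := SMulMemClass.smul_mem _ (sub_mem ha hstar)
    have hherm₁ : h₁.IsHermitian := by
      rw [Matrix.IsHermitian, ← Matrix.star_eq_conjTranspose, hh₁, star_smul, star_add,
        star_star, show star ((1:ℂ)/2) = (1:ℂ)/2 by norm_num]
      module
    have hherm₂ : h₂.IsHermitian := by
      rw [Matrix.IsHermitian, ← Matrix.star_eq_conjTranspose, hh₂, star_smul, star_sub,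
        star_star, show star (-(Complex.I)/2) = Complex.I/2 by
          simp [Complex.star_def, Complex.conj_I]]
      module
    have hkey : a = h₁ + Complex.I • h₂ := by
      rw [hh₁, hh₂, smul_smul,
        show Complex.I * (-(Complex.I)/2) = (1:ℂ)/2 by
          linear_combination (-(1:ℂ)/2) * Complex.I_mul_I]
      module
    clear_value h₁ h₂
    refine ⟨s.1 ⟨h₁, hmem₁, hherm₁⟩ + Complex.I * s.1 ⟨h₂, hmem₂, hherm₂⟩, ?_⟩
    conv_lhs => rw [hkey]
    rw [map_add, map_smul]
    simp only [LinearMap.add_apply, LinearMap.smul_apply]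
    rw [hherm ⟨h₁, hmem₁, hherm₁⟩ s, hherm ⟨h₂, hmem₂, hherm₂⟩ s, smul_smul, ← add_smul]
  -- the idempotents: projections onto the basis lines
  set P : ((χ : ι → ℂ) × Fin (Module.finrank ℂ (V χ))) → Module.End ℂ E := fun s =>
    (b.coord s).smulRight (b s) with hP
  have hPb : ∀ s t, P s (b t) = (if t = s then (1:ℂ) else 0) • b s := by
    intro s t
    rw [hP]
    simp only [LinearMap.smulRight_apply, Module.Basis.coord_apply, Module.Basis.repr_self]
    rw [Finsupp.single_apply]
  set p : ((χ : ι → ℂ) × Fin (Module.finrank ℂ (V χ))) → Matrix (Fin n) (Fin n) ℂ := fun s =>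
    Matrix.toEuclideanLin.symm (P s) with hp
  have hpe : ∀ s, Matrix.toEuclideanLin (p s) = P s := fun s =>
    Matrix.toEuclideanLin.apply_symm_apply (P s)
  -- membership in A via the centralizer property
  have hmemA : ∀ s, p s ∈ A := by
    intro s
    have : p s ∈ Set.centralizer (A : Set (Matrix (Fin n) (Fin n) ℂ)) := by
      intro a ha
      apply Matrix.toEuclideanLin.injective
      rw [toE_mul, toE_mul, hpe]
      choose c hc using fun t => heig a ha t
      apply b.ext
      intro t
      rw [Module.End.mul_apply, Module.End.mul_apply, hc t, hPb s t, map_smul, map_smul,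
        hc s, hPb s t]
      by_cases h : t = s
      · subst h; simp
      · simp [h]
    rw [← hA_masa] at this
    exact this
  -- products
  have hprod : ∀ s t, p s * p t = if s = t then p s else 0 := by
    intro s t
    apply Matrix.toEuclideanLin.injective
    rw [toE_mul, hpe, hpe]
    have : P s * P t = if s = t then P s else 0 := by
      apply b.ext
      intro u
      rw [Module.End.mul_apply, hPb t u, map_smul, hPb s t]
      by_cases h1 : s = t
      · subst h1; simp [hPb]
      · have h2 : ¬ t = s := fun h => h1 h.symm
        simp [h1, h2]
    rw [this]
    split_ifs with h
    · rw [hpe]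
    · simp
  -- trace
  have htrace : ∀ s, Matrix.trace (p s) = 1 := by
    intro s
    have h1 : Matrix.toEuclideanLin (p s) =
        Matrix.toLin (PiLp.basisFun 2 ℂ (Fin n)) (PiLp.basisFun 2 ℂ (Fin n)) (p s) := rfl
    have h2 : Matrix.trace (p s) = LinearMap.trace ℂ E (P s) := by
      rw [← hpe s, h1, LinearMap.trace_eq_matrix_trace ℂ (PiLp.basisFun 2 ℂ (Fin n)),
        LinearMap.toMatrix_toLin]
    rw [h2, LinearMap.trace_eq_matrix_trace ℂ b]
    rw [Matrix.trace]
    have : ∀ t, (LinearMap.toMatrix b b (P s)).diag t = if t = s then (1:ℂ) else 0 := by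
      intro t
      rw [Matrix.diag_apply, LinearMap.toMatrix_apply, hPb s t, map_smul, Module.Basis.repr_self,
        Finsupp.smul_single, smul_eq_mul, mul_one, Finsupp.single_apply]
      by_cases h : t = s
      · subst h; simp
      · simp [h, Ne.symm h]
    rw [Finset.sum_congr rfl fun t _ => this t]
    simp
  -- reindex by `Fin n`
  set e := Fintype.equivFinOfCardEq hcard with he
  refine ⟨fun i => p (e.symm i), fun i => hmemA _, fun i j => ?_, fun i => htrace _⟩
  by_cases h : i = j
  · subst h; rw [hprod]; simp
  · rw [hprod, if_neg (fun hh => h (e.symm.injective hh)), if_neg h]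

end Aux

/-- If `A`, `B` are masas of `M_n(ℂ)` (commutative star-subalgebras equal to their own
centralizers) that are orthogonal with respect to the normalized trace, then the linear
span of products `a * b`, `a ∈ A`, `b ∈ B`, is all of `M_n(ℂ)`. -/
theorem masa_orthogonal_span (n : ℕ) (hn : 1 ≤ n)
    (A B : StarSubalgebra ℂ (Matrix (Fin n) (Fin n) ℂ))
    (hA_comm : ∀ a ∈ A, ∀ a' ∈ A, a * a' = a' * a)
    (hB_comm : ∀ b ∈ B, ∀ b' ∈ B, b * b' = b' * b)
    (hA_masa : (A : Set (Matrix (Fin n) (Fin n) ℂ)) =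
      Set.centralizer (A : Set (Matrix (Fin n) (Fin n) ℂ)))
    (hB_masa : (B : Set (Matrix (Fin n) (Fin n) ℂ)) =
      Set.centralizer (B : Set (Matrix (Fin n) (Fin n) ℂ)))
    (horth : ∀ a ∈ A, ∀ b ∈ B, normTrace n (a * b) = normTrace n a * normTrace n b) :
    Submodule.span ℂ {x : Matrix (Fin n) (Fin n) ℂ | ∃ a ∈ A, ∃ b ∈ B, x = a * b} = ⊤ := by
  classical
  haveI : NeZero n := ⟨by omega⟩
  obtain ⟨p, hpA, hpp, hptr⟩ := masa_exists_idem n A hA_masa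
  obtain ⟨q, hqB, hqq, hqtr⟩ := masa_exists_idem n B hB_masa
  have hn0 : (n : ℂ) ≠ 0 := Nat.cast_ne_zero.mpr (by omega)
  -- trace of each product p i * q j equals 1/n
  have htr : ∀ i j, Matrix.trace (p i * q j) = (n : ℂ)⁻¹ := by
    intro i j
    have h := horth (p i) (hpA i) (q j) (hqB j)
    rw [normTrace, normTrace, normTrace, hptr i, hqtr j] at h
    calc Matrix.trace (p i * q j)
        = (n : ℂ) * ((n:ℂ)⁻¹ * Matrix.trace (p i * q j)) := by
          rw [← mul_assoc, mul_inv_cancel₀ hn0, one_mul]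
      _ = (n : ℂ) * (((n:ℂ)⁻¹ * 1) * ((n:ℂ)⁻¹ * 1)) := by
          rw [h]
      _ = (n : ℂ)⁻¹ := by
          field_simp
  -- the family of products is linearly independent
  set f : Fin n × Fin n → Matrix (Fin n) (Fin n) ℂ := fun ij => p ij.1 * q ij.2 with hf
  have hli : LinearIndependent ℂ f := by
    rw [Fintype.linearIndependent_iff]
    intro g hg ij
    obtain ⟨k, l⟩ := ij
    have h0 : p k * (∑ ij : Fin n × Fin n, g ij • f ij) * q l = 0 := by
      rw [hg, mul_zero, zero_mul]
    rw [Finset.mul_sum, Finset.sum_mul] at h0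
    have hterm : ∀ ij : Fin n × Fin n,
        p k * (g ij • f ij) * q l = if ij = (k, l) then g ij • (p k * q l) else 0 := by
      rintro ⟨i, j⟩
      rw [hf]
      simp only
      rw [mul_smul_comm, smul_mul_assoc]
      have : p k * (p i * q j) * q l = (p k * p i) * (q j * q l) := by
        rw [← mul_assoc, ← mul_assoc, mul_assoc (p k * p i)]
      rw [this, hpp k i, hqq j l]
      by_cases h1 : k = i
      · by_cases h2 : j = l
        · subst h1; subst h2; simp
        · have : ¬ ((i, j) = (k, l)) := by
            simp [Prod.ext_iff]; intro _; exact h2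
          simp [h1, h2, this]
      · have h1' : ¬ ((i, j) = (k, l)) := by
          simp [Prod.ext_iff]; intro h; exact absurd h.symm h1
        simp [h1, h1']
    rw [Finset.sum_congr rfl fun ij _ => hterm ij, Finset.sum_ite_eq' Finset.univ (k, l)] at h0
    simp only [Finset.mem_univ, if_true] at h0
    have htr0 : Matrix.trace (g (k, l) • (p k * q l)) = 0 := by rw [h0, Matrix.trace_zero]
    rw [Matrix.trace_smul, smul_eq_mul, htr k l] at htr0
    rcases mul_eq_zero.mp htr0 with h | h
    · exact h
    · exact absurd h (inv_ne_zero hn0)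
  -- the span of the family is everything, by dimension count
  have hspan : Submodule.span ℂ (Set.range f) = ⊤ := by
    apply hli.span_eq_top_of_card_eq_finrank
    rw [Module.finrank_matrix]
    simp [Fintype.card_prod]
  rw [eq_top_iff, ← hspan]
  apply Submodule.span_mono
  rintro x ⟨⟨i, j⟩, rfl⟩
  exact ⟨p i, hpA i, q j, hqB j, rfl⟩
end

section
/- Let ν be a finite Borel measure on [0,1] whose Lebesgue decomposition with respect to Lebesgue measure λ has a nonzero singular part. Then for every C > 0 there exists a sequence (f_k)_{k∈ℕ} of continuous complex-valued functions on [0,1], orthonormal in L²([0,1],λ), such that ∑_{k} |∫₀¹ f_k dν|² > C. In other words, the supremum over all such orthonormal sequences of ∑_k |∫ f_k dν|² is infinite. -/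
open MeasureTheory unitInterval

/-- A sequence of continuous complex functions on `[0,1]` is orthonormal in
`L²([0,1], λ)`. -/
def OrthonormalSeq (f : ℕ → C(I, ℂ)) : Prop :=
  ∀ j k : ℕ, (∫ t, f j t * (starRingEnd ℂ) (f k t)) = if j = k then (1 : ℂ) else 0

open Set intervalIntegral Real

lemma key (h : ℝ → ℝ) (hh : Continuous h) (h1 : (∫ x in (0:ℝ)..1, h x) = 1) (m : ℤ) :
    (∫ x in (0:ℝ)..1, (h x : ℂ) *
        Complex.exp (2 * Real.pi * m * Complex.I * ((∫ s in (0:ℝ)..x, h s : ℝ) : ℂ))) =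
      if m = 0 then 1 else 0 := by
  set H : ℝ → ℝ := fun x => ∫ s in (0:ℝ)..x, h s with hH
  have hderiv : ∀ x : ℝ, HasDerivAt H (h x) x := fun x =>
    integral_hasDerivAt_right (hh.intervalIntegrable 0 x)
      hh.aestronglyMeasurable.stronglyMeasurableAtFilter hh.continuousAt
  have hHcont : Continuous H := continuous_iff_continuousAt.2 fun x => (hderiv x).continuousAt
  rcases eq_or_ne m 0 with hm | hm
  · subst hm
    simp only [Int.cast_zero, mul_zero, zero_mul, Complex.exp_zero, mul_one, if_pos rfl, if_true]
    rw [intervalIntegral.integral_ofReal, h1, Complex.ofReal_one]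
  · rw [if_neg hm]
    set c₀ : ℂ := 2 * Real.pi * m * Complex.I with hc₀
    have hc₀ne : c₀ ≠ 0 := by
      rw [hc₀]
      refine mul_ne_zero (mul_ne_zero (mul_ne_zero two_ne_zero ?_) ?_) Complex.I_ne_zero
      · exact Complex.ofReal_ne_zero.mpr Real.pi_ne_zero
      · exact_mod_cast Int.cast_ne_zero.mpr hm
    set F : ℝ → ℂ := fun x => Complex.exp (c₀ * (H x : ℂ)) / c₀ with hF
    have hFderiv : ∀ x : ℝ, HasDerivAt F ((h x : ℂ) * Complex.exp (c₀ * (H x : ℂ))) x := by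
      intro x
      have h1' : HasDerivAt (fun y => ((H y : ℝ) : ℂ)) ((h x : ℂ)) x :=
        (hderiv x).ofReal_comp
      have h3' : HasDerivAt (fun y => Complex.exp (c₀ * ((H y : ℝ) : ℂ)))
          (Complex.exp (c₀ * (H x : ℂ)) * (c₀ * (h x : ℂ))) x := (h1'.const_mul c₀).cexp
      have := h3'.div_const c₀
      convert this using 1
      · rfl
      rw [eq_div_iff hc₀ne]
      ring
    have hint : (∫ x in (0:ℝ)..1, (h x : ℂ) * Complex.exp (c₀ * (H x : ℂ))) = F 1 - F 0 := by
      apply intervalIntegral.integral_eq_sub_of_hasDerivAt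
      · intro x _; exact hFderiv x
      · apply Continuous.intervalIntegrable
        exact (Complex.continuous_ofReal.comp hh).mul
          (Complex.continuous_exp.comp (continuous_const.mul (Complex.continuous_ofReal.comp hHcont)))
    rw [hint]
    have hH1 : H 1 = 1 := h1
    have hH0 : H 0 = 0 := intervalIntegral.integral_same
    have e1 : Complex.exp (c₀ * ((H 1 : ℝ) : ℂ)) = 1 := by
      rw [hH1, Complex.ofReal_one, mul_one, hc₀]
      have := Complex.exp_int_mul_two_pi_mul_I m
      rw [← this]; ring_nf
    have e0 : Complex.exp (c₀ * ((H 0 : ℝ) : ℂ)) = 1 := by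
      rw [hH0]; simp
    show Complex.exp (c₀ * ((H 1 : ℝ) : ℂ)) / c₀ - Complex.exp (c₀ * ((H 0 : ℝ) : ℂ)) / c₀ = 0
    rw [e1, e0, sub_self]

noncomputable section

lemma transfer {E : Type*} [NormedAddCommGroup E] [NormedSpace ℝ E] (F : ℝ → E) :
    (∫ t : I, F ↑t) = ∫ x in (0:ℝ)..1, F x := by
  rw [MeasureTheory.integral_subtype measurableSet_Icc,
    intervalIntegral.integral_of_le zero_le_one, MeasureTheory.integral_Icc_eq_integral_Ioc]

lemma construction (g : C(I, ℝ))
    (hc : 0 < ∫ x in (0:ℝ)..1, (g (projIcc 0 1 zero_le_one x))^2) :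
    ∃ f : ℕ → C(I, ℂ), OrthonormalSeq f ∧
      ∀ ν : Measure I, (∫ t, f 0 t ∂ν) =
        (((∫ t, g t ∂ν) / Real.sqrt (∫ x in (0:ℝ)..1, (g (projIcc 0 1 zero_le_one x))^2) : ℝ) : ℂ) := by
  set G : ℝ → ℝ := fun x => g (projIcc 0 1 zero_le_one x) with hG
  have hGcont : Continuous G := (map_continuous g).comp continuous_projIcc
  set c : ℝ := ∫ x in (0:ℝ)..1, (G x)^2 with hcdef
  set h : ℝ → ℝ := fun x => (G x)^2 / c with hhdef
  have hhcont : Continuous h := (hGcont.pow 2).div_const c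
  have hh1 : (∫ x in (0:ℝ)..1, h x) = 1 := by
    simp only [hhdef, intervalIntegral.integral_div]
    exact div_self hc.ne'
  set H : ℝ → ℝ := fun x => ∫ s in (0:ℝ)..x, h s with hHdef
  have hderiv : ∀ x : ℝ, HasDerivAt H (h x) x := fun x =>
    integral_hasDerivAt_right (hhcont.intervalIntegrable 0 x)
      hhcont.aestronglyMeasurable.stronglyMeasurableAtFilter hhcont.continuousAt
  have hHcont : Continuous H := continuous_iff_continuousAt.2 fun x => (hderiv x).continuousAt
  set b : ℝ := Real.sqrt c with hbdef
  have hb : 0 < b := Real.sqrt_pos.mpr hc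
  have hb2 : b ^ 2 = c := Real.sq_sqrt hc.le
  set F : ℕ → ℝ → ℂ := fun k x => ((G x / b : ℝ) : ℂ) *
      Complex.exp (2 * Real.pi * (k : ℂ) * Complex.I * ((H x : ℝ) : ℂ)) with hFdef
  have hFcont : ∀ k, Continuous (F k) := by
    intro k
    exact (Complex.continuous_ofReal.comp (hGcont.div_const b)).mul
      (Complex.continuous_exp.comp (continuous_const.mul (Complex.continuous_ofReal.comp hHcont)))
  refine ⟨fun k => ⟨fun t => F k ↑t, (hFcont k).comp continuous_subtype_val⟩, ?_, ?_⟩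
  · intro j k
    have hGt : ∀ t : I, G ↑t = g t := by
      intro t; simp only [hG, projIcc_val]
    have hpt : ∀ x : ℝ, F j x * (starRingEnd ℂ) (F k x)
        = (h x : ℂ) * Complex.exp (2 * Real.pi * (((j:ℤ) - (k:ℤ) : ℤ) : ℂ) * Complex.I *
            ((H x : ℝ) : ℂ)) := by
      intro x
      simp only [hFdef, map_mul, Complex.conj_ofReal, ← Complex.exp_conj, map_mul,
        Complex.conj_I, map_ofNat, Complex.conj_natCast]
      have hb0 : (b : ℂ) ≠ 0 := by exact_mod_cast hb.ne'
      have hc0 : (c : ℂ) ≠ 0 := by exact_mod_cast hc.ne'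
      have hbc : (b : ℂ) ^ 2 = (c : ℂ) := by exact_mod_cast hb2
      rw [mul_mul_mul_comm, ← Complex.exp_add]
      congr 1
      · simp only [hhdef]
        push_cast
        rw [← hbc]
        ring
      · push_cast
        ring
    calc (∫ t : I, F j ↑t * (starRingEnd ℂ) (F k ↑t))
        = ∫ t : I, (fun x => (h x : ℂ) * Complex.exp (2 * Real.pi * (((j:ℤ) - (k:ℤ) : ℤ) : ℂ) *
            Complex.I * ((H x : ℝ) : ℂ))) ↑t := by
          exact integral_congr_ae (Filter.Eventually.of_forall fun t => hpt ↑t)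
      _ = ∫ x in (0:ℝ)..1, (h x : ℂ) * Complex.exp (2 * Real.pi * (((j:ℤ) - (k:ℤ) : ℤ) : ℂ) *
            Complex.I * ((H x : ℝ) : ℂ)) := transfer (fun x => (h x : ℂ) *
              Complex.exp (2 * Real.pi * (((j:ℤ) - (k:ℤ) : ℤ) : ℂ) * Complex.I * ((H x : ℝ) : ℂ)))
      _ = if (j:ℤ) - (k:ℤ) = 0 then 1 else 0 := key h hhcont hh1 ((j:ℤ) - (k:ℤ))
      _ = if j = k then 1 else 0 := by
          congr 1
          simp [sub_eq_zero]
  · intro ν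
    have h0 : ∀ t : I, F 0 ↑t = ((g t / b : ℝ) : ℂ) := by
      intro t
      simp [hFdef, hG, projIcc_val]
    calc (∫ t, F 0 ↑t ∂ν) = ∫ t, ((g t / b : ℝ) : ℂ) ∂ν :=
          integral_congr_ae (Filter.Eventually.of_forall fun t => h0 t)
      _ = (((∫ t, g t ∂ν) / b : ℝ) : ℂ) := by
          rw [show (fun t : I => ((g t / b : ℝ) : ℂ)) = fun t : I => ((RCLike.ofReal (g t / b)) : ℂ) from rfl,
            _root_.integral_ofReal, MeasureTheory.integral_div]
          norm_cast
      _ = _ := rfl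
end

/-- If the Lebesgue decomposition of a finite Borel measure `ν` on `[0,1]` with respect
to Lebesgue measure has a nonzero singular part, then for every `C > 0` there is an
orthonormal sequence of continuous functions `(f_k)` with `∑ₖ |∫ f_k dν|² > C`. -/
theorem singular_part_gives_unbounded_fourier_sums (ν : Measure I) [IsFiniteMeasure ν]
    (hsing : ν.singularPart volume ≠ 0) :
    ∀ C > (0 : ℝ), ∃ f : ℕ → C(I, ℂ), OrthonormalSeq f ∧
      ∃ n : ℕ, C < ∑ k ∈ Finset.range n, ‖∫ t, f k t ∂ν‖ ^ 2 := by
  intro C hC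
  set μ := ν.singularPart volume with hμdef
  have hμle : μ ≤ ν := Measure.singularPart_le ν volume
  obtain ⟨s, hsm, hμs, hvs⟩ := Measure.mutuallySingular_singularPart ν volume
  have hμT : μ sᶜ = μ Set.univ := by
    rw [measure_compl hsm (measure_ne_top μ s), hμs, tsub_zero]
  have hμTpos : 0 < μ sᶜ := by
    rw [hμT]; exact Measure.measure_univ_pos.mpr hsing
  obtain ⟨K, hKsub, hKcomp, hKgt⟩ :=
    hsm.compl.exists_lt_isCompact (ENNReal.half_lt_self hμTpos.ne' (measure_ne_top μ _))
  set mr := (μ sᶜ).toReal with hmrdef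
  have hmr : 0 < mr := ENNReal.toReal_pos hμTpos.ne' (measure_ne_top μ _)
  have hK2 : mr / 2 < (μ K).toReal := by
    have h2ne : (μ sᶜ) / 2 ≠ ⊤ := by
      exact (ENNReal.div_lt_top (measure_ne_top μ _) two_ne_zero).ne
    have := (ENNReal.toReal_lt_toReal h2ne (measure_ne_top μ K)).mpr hKgt
    rwa [ENNReal.toReal_div, ENNReal.toReal_ofNat] at this
  have hKvol : (volume : Measure I) K = 0 :=
    le_antisymm (hvs ▸ measure_mono hKsub) (by positivity)
  set ε := mr ^ 2 / (8 * (C + 1)) with hεdef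
  have hε : 0 < ε := by positivity
  obtain ⟨U, hUK, hUopen, hUvol⟩ := Set.exists_isOpen_lt_of_lt K (ENNReal.ofReal ε)
      (by rw [hKvol]; exact ENNReal.ofReal_pos.mpr hε)
  obtain ⟨g, hg0, hg1, hg01⟩ := exists_continuous_zero_one_of_isClosed
      hUopen.isClosed_compl hKcomp.isClosed
      (disjoint_left.mpr fun x hxU hxK => hxU (hUK hxK))
  have hgnn : ∀ t : I, 0 ≤ g t := fun t => (hg01 t).1
  have hgle : ∀ t : I, g t ≤ 1 := fun t => (hg01 t).2
  set G : ℝ → ℝ := fun x => g (projIcc 0 1 zero_le_one x) with hGdef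
  have hGcont : Continuous G := (map_continuous g).comp continuous_projIcc
  have hGt : ∀ t : I, G ↑t = g t := fun t => by simp only [hGdef, projIcc_val]
  obtain ⟨x₀, hx₀⟩ : K.Nonempty := nonempty_of_measure_ne_zero
      (lt_trans (ENNReal.half_pos hμTpos.ne') hKgt).ne'
  have hGx₀ : G ↑x₀ = 1 := by rw [hGt x₀]; exact hg1 hx₀
  -- positivity of `c`
  have hcpos : 0 < ∫ x in (0:ℝ)..1, (G x)^2 := by
    rw [intervalIntegral.integral_of_le zero_le_one]
    have hint : IntegrableOn (fun x => G x ^ 2) (Set.Ioc (0:ℝ) 1) volume :=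
      ((hGcont.pow 2).continuousOn.integrableOn_compact isCompact_Icc).mono_set
        Set.Ioc_subset_Icc_self
    rw [MeasureTheory.setIntegral_pos_iff_support_of_nonneg_ae
      (Filter.Eventually.of_forall fun x => sq_nonneg (G x)) hint]
    set V := G ⁻¹' Set.Ioi (0:ℝ) with hVdef
    have hVopen : IsOpen V := isOpen_Ioi.preimage hGcont
    have hx₀V : (x₀ : ℝ) ∈ V := by
      simp only [hVdef, Set.mem_preimage, Set.mem_Ioi, hGx₀]; norm_num
    have hmem : (x₀ : ℝ) ∈ closure (Set.Ioo (0:ℝ) 1) := by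
      rw [closure_Ioo (by norm_num : (0:ℝ) ≠ 1)]; exact x₀.2
    obtain ⟨y, hyV, hyI⟩ := _root_.mem_closure_iff.mp hmem V hVopen hx₀V
    have hpos : 0 < volume (V ∩ Set.Ioo (0:ℝ) 1) :=
      (hVopen.inter isOpen_Ioo).measure_pos volume ⟨y, hyV, hyI⟩
    refine lt_of_lt_of_le hpos (measure_mono ?_)
    rintro z ⟨hzV, hz01⟩
    refine ⟨?_, Set.Ioo_subset_Ioc_self hz01⟩
    have : 0 < G z := hzV
    simp only [Function.mem_support]
    positivity
  -- `c` is at most `ε`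
  have hceq : (∫ x in (0:ℝ)..1, (G x)^2) = ∫ t : I, (g t)^2 := by
    rw [← transfer (fun x => (G x)^2)]
    exact integral_congr_ae (Filter.Eventually.of_forall fun t => by
      show G (↑t) ^ 2 = g t ^ 2; rw [hGt t])
  have hUmeas : MeasurableSet U := hUopen.measurableSet
  have hKmeas : MeasurableSet K := hKcomp.isClosed.measurableSet
  have hgsqint : Integrable (fun t : I => (g t)^2) (volume : Measure I) :=
    integrableOn_univ.mp (((map_continuous g).pow 2).continuousOn.integrableOn_compact
      isCompact_univ)
  have hcleU : (∫ t : I, (g t)^2) ≤ ((volume : Measure I) U).toReal := by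
    have hind : Integrable (U.indicator fun _ : I => (1:ℝ)) volume :=
      (integrable_const 1).indicator hUmeas
    have hle : ∀ t : I, (g t)^2 ≤ U.indicator (fun _ => (1:ℝ)) t := by
      intro t
      by_cases ht : t ∈ U
      · rw [Set.indicator_of_mem ht]
        exact pow_le_one₀ (hgnn t) (hgle t)
      · rw [Set.indicator_of_notMem ht, hg0 ht]
        norm_num
    calc (∫ t : I, (g t)^2) ≤ ∫ t : I, U.indicator (fun _ => (1:ℝ)) t :=
          integral_mono hgsqint hind hle
      _ = ((volume : Measure I) U).toReal := by
          rw [integral_indicator_const (1:ℝ) hUmeas]; simp; rfl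
  -- lower bound on `∫ g dν`
  have hgint_ν : Integrable (fun t : I => g t) ν :=
    integrableOn_univ.mp ((map_continuous g).continuousOn.integrableOn_compact isCompact_univ)
  have hgint_μ : Integrable (fun t : I => g t) μ :=
    integrableOn_univ.mp ((map_continuous g).continuousOn.integrableOn_compact isCompact_univ)
  have h1 : (μ K).toReal ≤ ∫ t, g t ∂μ := by
    have hle : ∀ t : I, K.indicator (fun _ => (1:ℝ)) t ≤ g t := by
      intro t
      by_cases ht : t ∈ K
      · rw [Set.indicator_of_mem ht]; exact (hg1 ht).ge
      · rw [Set.indicator_of_notMem ht]; exact hgnn t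
    calc (μ K).toReal = ∫ t : I, K.indicator (fun _ => (1:ℝ)) t ∂μ := by
          rw [integral_indicator_const (1:ℝ) hKmeas]; simp; rfl
      _ ≤ ∫ t, g t ∂μ :=
          integral_mono ((integrable_const 1).indicator hKmeas) hgint_μ hle
  have h2 : (∫ t, g t ∂μ) ≤ ∫ t, g t ∂ν :=
    integral_mono_measure hμle (Filter.Eventually.of_forall hgnn) hgint_ν
  -- assemble
  have hcpos' : 0 < ∫ x in (0:ℝ)..1, (g (projIcc 0 1 zero_le_one x))^2 := by
    simpa only [hGdef] using hcpos
  obtain ⟨f, hON, hf0⟩ := construction g hcpos'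
  refine ⟨f, hON, 1, ?_⟩
  rw [Finset.sum_range_one, hf0 ν]
  set c := ∫ x in (0:ℝ)..1, (g (projIcc 0 1 zero_le_one x))^2 with hcdef
  set A := ∫ t, g t ∂ν with hAdef
  have hcp : 0 < c := hcpos'
  have hnorm : ‖((A / Real.sqrt c : ℝ) : ℂ)‖ ^ 2 = A ^ 2 / c := by
    rw [Complex.norm_real, Real.norm_eq_abs, sq_abs, div_pow, Real.sq_sqrt hcp.le]
  rw [hnorm]
  have hcε : c < ε := by
    calc c = ∫ t : I, (g t)^2 := hceq
      _ ≤ ((volume : Measure I) U).toReal := hcleU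
      _ < ε := ENNReal.toReal_lt_of_lt_ofReal hUvol
  have hA : mr / 2 < A := lt_of_lt_of_le hK2 (h1.trans h2)
  have hA0 : 0 < A := lt_of_le_of_lt (by positivity) hA
  calc C < 2 * (C + 1) := by linarith
    _ = (mr / 2) ^ 2 / ε := by
        rw [hεdef]
        have h1' : mr ≠ 0 := hmr.ne'
        have h2' : C + 1 ≠ 0 := by linarith
        field_simp
        ring
    _ < (mr / 2) ^ 2 / c := div_lt_div_of_pos_left (by positivity) hcp hcε
    _ ≤ A ^ 2 / c :=
        (div_le_div_iff_of_pos_right hcp).mpr (pow_le_pow_left₀ (by positivity) hA.le 2)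
end

section
/- Let κ be a finite kernel from [0,1] to [0,1] (a measurable family t ↦ κ_t of finite Borel measures on [0,1] with uniformly bounded total mass). Suppose that for λ-almost every t ∈ [0,1] there is a constant C_t such that ∑_k |∫₀¹ f_k dκ_t|² ≤ C_t for every sequence (f_k) of continuous complex-valued functions on [0,1] orthonormal in L²([0,1],λ). Then the measure λ ⊗ κ on [0,1]×[0,1], defined by (λ ⊗ κ)(E) = ∫₀¹ κ_t({s : (t,s) ∈ E}) dλ(t), is absolutely continuous with respect to the product measure λ ⊗ λ. -/
open MeasureTheory ProbabilityTheory unitInterval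
open scoped ProbabilityTheory

noncomputable section
namespace KBF

lemma integrable_cont {E : Type*} [NormedAddCommGroup E] {f : I → E} (hf : Continuous f)
    (μ : Measure I) [IsFiniteMeasure μ] : Integrable f μ := by
  rw [← integrableOn_univ]
  exact hf.continuousOn.integrableOn_compact isCompact_univ

instance : (volume : Measure I).IsOpenPosMeasure := by
  refine ⟨fun U hU hne => ?_⟩
  obtain ⟨V, hV, rfl⟩ := isOpen_induced_iff.mp hU
  obtain ⟨x, hxV⟩ := hne
  rw [unitInterval.volume_def, comap_subtype_coe_apply measurableSet_Icc]
  obtain ⟨ε, hε, hball⟩ := Metric.isOpen_iff.mp hV x hxV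
  have hsub : Set.Ioo (max 0 ((x:ℝ) - ε)) (min 1 ((x:ℝ) + ε)) ⊆ (Subtype.val : I → ℝ) '' ((Subtype.val : I → ℝ) ⁻¹' V) := by
    intro y hy
    obtain ⟨hy1, hy2⟩ := hy
    have h1 := max_lt_iff.mp hy1
    have h2 := lt_min_iff.mp hy2
    have hyI : y ∈ I := ⟨h1.1.le, h2.1.le⟩
    refine ⟨⟨y, hyI⟩, ?_, rfl⟩
    refine Set.mem_preimage.mpr (hball ?_)
    rw [Metric.mem_ball, Real.dist_eq, abs_lt]
    constructor <;> [linarith [h1.2]; linarith [h2.2]]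
  have hlt : max 0 ((x:ℝ) - ε) < min 1 ((x:ℝ) + ε) := by
    have h0 : (0:ℝ) ≤ (x:ℝ) := x.2.1
    have h1 : (x:ℝ) ≤ 1 := x.2.2
    simp only [max_lt_iff, lt_min_iff]
    refine ⟨⟨zero_lt_one, by linarith⟩, ⟨by linarith, by linarith⟩⟩
  intro h0
  have := measure_mono_null hsub h0
  rw [Real.volume_Ioo] at this
  exact (ENNReal.ofReal_pos.mpr (by linarith)).ne' this

/-- The `L²(volume)` inner product of two continuous functions on `I`. -/
def ip (f g : C(I, ℂ)) : ℂ := ∫ t, f t * (starRingEnd ℂ) (g t)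

lemma integrable_mul (f g : C(I, ℂ)) :
    Integrable (fun t => f t * (starRingEnd ℂ) (g t)) (volume : Measure I) :=
  integrable_cont (f.continuous.mul (continuous_star.comp g.continuous)) _

lemma ip_zero_left (g : C(I, ℂ)) : ip 0 g = 0 := by simp [ip]

lemma ip_add_left (f g h : C(I, ℂ)) : ip (f + g) h = ip f h + ip g h := by
  simp only [ip, ContinuousMap.add_apply, add_mul]
  exact integral_add (integrable_mul f h) (integrable_mul g h)

lemma ip_smul_left (c : ℂ) (f g : C(I, ℂ)) : ip (c • f) g = c * ip f g := by
  simp only [ip, ContinuousMap.smul_apply, smul_eq_mul, mul_assoc]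
  exact integral_const_mul c _

lemma ip_sub_left (f g h : C(I, ℂ)) : ip (f - g) h = ip f h - ip g h := by
  simp only [ip, ContinuousMap.sub_apply, sub_mul]
  exact integral_sub (integrable_mul f h) (integrable_mul g h)

lemma ip_conj_symm (f g : C(I, ℂ)) : ip f g = (starRingEnd ℂ) (ip g f) := by
  rw [ip, ip, ← integral_conj]
  congr 1; ext t
  simp [mul_comm]

lemma ip_sum_left {ι : Type*} (s : Finset ι) (f : ι → C(I, ℂ)) (g : C(I, ℂ)) :
    ip (∑ i ∈ s, f i) g = ∑ i ∈ s, ip (f i) g := by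
  classical
  induction s using Finset.induction with
  | empty => simp [ip_zero_left]
  | insert a s h ih => rw [Finset.sum_insert h, ip_add_left, ih, Finset.sum_insert h]

lemma ip_smul_right (c : ℂ) (f g : C(I, ℂ)) : ip f (c • g) = (starRingEnd ℂ) c * ip f g := by
  rw [ip_conj_symm, ip_smul_left, map_mul, ← ip_conj_symm]

lemma ip_sub_right (f g h : C(I, ℂ)) : ip f (g - h) = ip f g - ip f h := by
  rw [ip_conj_symm, ip_sub_left, map_sub, ← ip_conj_symm, ← ip_conj_symm]

lemma ip_sum_right {ι : Type*} (s : Finset ι) (f : C(I, ℂ)) (g : ι → C(I, ℂ)) :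
    ip f (∑ i ∈ s, g i) = ∑ i ∈ s, ip f (g i) := by
  rw [ip_conj_symm, ip_sum_left, map_sum]
  exact Finset.sum_congr rfl fun i _ => (ip_conj_symm _ _).symm

/-- The squared `L²` norm. -/
def nsq (f : C(I, ℂ)) : ℝ := ∫ t, Complex.normSq (f t)

lemma ip_self (f : C(I, ℂ)) : ip f f = (nsq f : ℂ) := by
  have : ∀ t : I, f t * (starRingEnd ℂ) (f t) = ((Complex.normSq (f t) : ℝ) : ℂ) :=
    fun t => Complex.mul_conj _
  rw [ip, nsq]
  simp_rw [this]
  exact integral_ofReal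

lemma nsq_nonneg (f : C(I, ℂ)) : 0 ≤ nsq f :=
  integral_nonneg fun t => Complex.normSq_nonneg _

lemma nsq_pos (f : C(I, ℂ)) (hf : ∃ x, f x ≠ 0) : 0 < nsq f := by
  obtain ⟨x, hx⟩ := hf
  rw [nsq]
  have hint : Integrable (fun t => Complex.normSq (f t)) (volume : Measure I) :=
    integrable_cont (Complex.continuous_normSq.comp f.continuous) _
  rw [integral_pos_iff_support_of_nonneg (fun t => Complex.normSq_nonneg _) hint]
  have hopen : IsOpen {t : I | f t ≠ 0} :=
    isOpen_compl_singleton.preimage f.continuous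
  have hsub : {t : I | f t ≠ 0} ⊆ Function.support fun t => Complex.normSq (f t) := by
    intro t ht
    simpa [Function.mem_support, Complex.normSq_eq_zero] using ht
  exact lt_of_lt_of_le (hopen.measure_pos _ ⟨x, hx⟩) (measure_mono hsub)

lemma claimU (μ : Measure I) [IsFiniteMeasure μ] (hns : ¬ μ ≪ (volume : Measure I)) (M : ℝ) :
    ∃ g : C(I, ℂ), ip g g = 1 ∧ M ≤ ‖∫ s, g s ∂μ‖ := by
  have hex : ∃ s : Set I, (volume : Measure I) s = 0 ∧ μ s ≠ 0 := by
    by_contra h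
    push_neg at h
    exact hns fun s hs => h s hs
  obtain ⟨s, hs0, hμs⟩ := hex
  obtain ⟨t, hst, htm, ht0⟩ := exists_measurable_superset_of_null hs0
  have hμt : 0 < μ t :=
    lt_of_lt_of_le (pos_iff_ne_zero.mpr hμs) (measure_mono hst)
  obtain ⟨K, hKt, hKc, hKpos⟩ := (Measure.InnerRegular.innerRegular (μ := μ)) htm 0 hμt
  have hlamK : (volume : Measure I) K = 0 := measure_mono_null hKt ht0
  set c : ℝ := (μ K).toReal with hc
  have hcpos : 0 < c := ENNReal.toReal_pos hKpos.ne' (measure_ne_top μ K)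
  set δ : ℝ := (c / (|M| + 1)) ^ 2 with hδ
  have hM1 : 0 < |M| + 1 := by positivity
  have hδpos : 0 < δ := by positivity
  obtain ⟨U, hKU, hUo, hUvol⟩ :=
    K.exists_isOpen_lt_of_lt (ENNReal.ofReal δ) (by rw [hlamK]; exact ENNReal.ofReal_pos.mpr hδpos)
  obtain ⟨g, hg0, hg1, hg01⟩ := exists_continuous_zero_one_of_isClosed hUo.isClosed_compl
    hKc.isClosed (Set.disjoint_left.mpr fun x hxc hxK => hxc (hKU hxK))
  have hgnn : ∀ x, 0 ≤ g x := fun x => (hg01 x).1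
  have hgle : ∀ x, g x ≤ 1 := fun x => (hg01 x).2
  have hgint : Integrable (fun x => g x) μ := integrable_cont g.continuous μ
  -- lower bound for ∫ g dμ
  have h1 : c ≤ ∫ x, g x ∂μ := by
    have e1 : ∫ x in K, (1 : ℝ) ∂μ = c := by simp [hc, measureReal_def]
    have e2 : ∫ x in K, (1 : ℝ) ∂μ = ∫ x in K, g x ∂μ :=
      setIntegral_congr_fun hKc.measurableSet fun x hx => (hg1 hx).symm
    rw [← e1, e2]
    exact setIntegral_le_integral hgint (Filter.Eventually.of_forall hgnn)
  -- upper bound for the L² norm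
  have h2 : ∫ x, g x ^ 2 ∂(volume : Measure I) ≤ δ := by
    have hptwise : ∀ x, g x ^ 2 ≤ U.indicator (fun _ => (1 : ℝ)) x := by
      intro x
      by_cases hx : x ∈ U
      · rw [Set.indicator_of_mem hx]
        calc g x ^ 2 ≤ 1 ^ 2 := by nlinarith [hgnn x, hgle x]
        _ = 1 := one_pow 2
      · rw [Set.indicator_of_notMem hx]
        have : g x = 0 := hg0 hx
        simp [this]
    have hind : Integrable (U.indicator fun _ => (1 : ℝ)) (volume : Measure I) :=
      (integrable_const (1 : ℝ)).indicator hUo.measurableSet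
    calc ∫ x, g x ^ 2 ∂(volume : Measure I)
        ≤ ∫ x, U.indicator (fun _ => (1 : ℝ)) x ∂(volume : Measure I) :=
          integral_mono (integrable_cont (g.continuous.pow 2) _) hind hptwise
      _ = ((volume : Measure I) U).toReal := by
          rw [integral_indicator hUo.measurableSet]; simp [measureReal_def]
      _ ≤ δ := by
          have := (ENNReal.toReal_lt_of_lt_ofReal hUvol)
          linarith
  set N2 : ℝ := ∫ x, g x ^ 2 ∂(volume : Measure I) with hN2
  have hN2pos : 0 < N2 := by
    have hKne : K.Nonempty := nonempty_of_measure_ne_zero hKpos.ne'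
    obtain ⟨x0, hx0⟩ := hKne
    rw [hN2, integral_pos_iff_support_of_nonneg (fun x => sq_nonneg _)
      (integrable_cont (g.continuous.pow 2) _)]
    have hopen : IsOpen {x : I | g x ≠ 0} := isOpen_compl_singleton.preimage g.continuous
    have hsub : {x : I | g x ≠ 0} ⊆ Function.support fun x => g x ^ 2 := by
      intro x hx
      simp only [Function.mem_support, pow_eq_zero_iff]
      exact fun h => hx (by simpa using h)
    refine lt_of_lt_of_le (hopen.measure_pos _ ⟨x0, ?_⟩) (measure_mono hsub)
    simp [hg1 hx0]
  set N : ℝ := Real.sqrt N2 with hN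
  have hNpos : 0 < N := Real.sqrt_pos.mpr hN2pos
  set G : C(I, ℂ) := ⟨fun x => ((g x : ℝ) : ℂ), Complex.continuous_ofReal.comp g.continuous⟩ with hG
  refine ⟨((N⁻¹ : ℝ) : ℂ) • G, ?_, ?_⟩
  · rw [ip_smul_left, ip_smul_right]
    have hGG : ip G G = (N2 : ℂ) := by
      have : ∀ x : I, G x * (starRingEnd ℂ) (G x) = ((g x ^ 2 : ℝ) : ℂ) := by
        intro x
        simp [hG, Complex.conj_ofReal, ← Complex.ofReal_mul, sq]
      rw [ip]
      simp_rw [this]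
      rw [hN2]
      exact integral_ofReal
    rw [hGG, Complex.conj_ofReal, ← Complex.ofReal_mul, ← Complex.ofReal_mul]
    norm_cast
    have hNN : N * N = N2 := Real.mul_self_sqrt hN2pos.le
    field_simp
    linarith
  · have hGint : ∫ s, G s ∂μ = ((∫ x, g x ∂μ : ℝ) : ℂ) := by
      simp only [hG, ContinuousMap.coe_mk]
      exact integral_ofReal
    have : ∫ s, (((N⁻¹ : ℝ) : ℂ) • G) s ∂μ = ((N⁻¹ : ℝ) : ℂ) * ∫ s, G s ∂μ := by
      simp only [ContinuousMap.smul_apply, smul_eq_mul]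
      exact integral_const_mul _ _
    rw [this, hGint, norm_mul, Complex.norm_real, Complex.norm_real,
      Real.norm_eq_abs, Real.norm_eq_abs, abs_of_nonneg (inv_nonneg.mpr hNpos.le),
      abs_of_nonneg (le_trans hcpos.le h1)]
    have hNle : N ≤ c / (|M| + 1) := by
      rw [hN, hδ] at *
      calc Real.sqrt N2 ≤ Real.sqrt ((c / (|M| + 1)) ^ 2) := Real.sqrt_le_sqrt h2
        _ = c / (|M| + 1) := Real.sqrt_sq (by positivity)
    calc M ≤ |M| + 1 := by cases abs_cases M <;> linarith
      _ = c / (c / (|M| + 1)) := by field_simp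
      _ ≤ c / N := by
          apply div_le_div_of_nonneg_left hcpos.le hNpos hNle
      _ ≤ N⁻¹ * ∫ x, g x ∂μ := by
          rw [div_eq_inv_mul]
          exact mul_le_mul_of_nonneg_left h1 (inv_nonneg.mpr hNpos.le)

/-- A finite orthonormal family of continuous functions all of whose `μ`-integrals
have norm at least 1. -/
def Good (μ : Measure I) (n : ℕ) (F : Fin n → C(I, ℂ)) : Prop :=
  (∀ i j, ip (F i) (F j) = if i = j then 1 else 0) ∧ ∀ i, 1 ≤ ‖∫ s, F i s ∂μ‖

lemma extend_step (μ : Measure I) [IsFiniteMeasure μ]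
    (hU : ∀ M : ℝ, ∃ g : C(I, ℂ), ip g g = 1 ∧ M ≤ ‖∫ s, g s ∂μ‖)
    {n : ℕ} {F : Fin n → C(I, ℂ)} (hF : Good μ n F) :
    ∃ g : C(I, ℂ), Good μ (n + 1) (Fin.snoc F g) := by
  classical
  obtain ⟨horth, hbig⟩ := hF
  set S : ℝ := ∑ i, ‖∫ s, F i s ∂μ‖ with hS
  have hS0 : 0 ≤ S := Finset.sum_nonneg fun i _ => norm_nonneg _
  obtain ⟨g, hg1, hgM⟩ := hU (S + 1)
  set c : Fin n → ℂ := fun i => ip g (F i) with hcdef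
  set h : C(I, ℂ) := g - ∑ i, c i • F i with hh
  -- `h` is orthogonal to each `F j`
  have hhF : ∀ j, ip h (F j) = 0 := by
    intro j
    rw [hh, ip_sub_left, ip_sum_left]
    have e : ∀ i : Fin n, ip (c i • F i) (F j) = if i = j then c j else 0 := by
      intro i
      rw [ip_smul_left, horth]
      split <;> simp_all
    rw [Finset.sum_congr rfl fun i _ => e i]
    simp [hcdef]
  have hFh : ∀ j, ip (F j) h = 0 := fun j => by
    rw [ip_conj_symm, hhF, map_zero]
  -- `ip h h`
  have hhh : ip h h = 1 - ∑ i, (Complex.normSq (c i) : ℂ) := by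
    have e1 : ip h h = ip h g - ∑ i, (starRingEnd ℂ) (c i) * ip h (F i) := by
      nth_rewrite 2 [hh]
      rw [ip_sub_right, ip_sum_right]
      congr 1
      exact Finset.sum_congr rfl fun i _ => ip_smul_right _ _ _
    rw [e1]
    simp only [hhF, mul_zero, Finset.sum_const_zero, sub_zero]
    rw [hh, ip_sub_left, ip_sum_left, hg1]
    congr 1
    refine Finset.sum_congr rfl fun i _ => ?_
    rw [ip_smul_left, ip_conj_symm (F i) g]
    exact Complex.mul_conj _
  have hnsq : nsq h = 1 - ∑ i, Complex.normSq (c i) := by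
    have e := (ip_self h).symm.trans hhh
    have : ((nsq h : ℝ) : ℂ) = ((1 - ∑ i, Complex.normSq (c i) : ℝ) : ℂ) := by
      push_cast
      exact e
    exact_mod_cast this
  have hsumnn : 0 ≤ ∑ i, Complex.normSq (c i) :=
    Finset.sum_nonneg fun i _ => Complex.normSq_nonneg _
  have hsum_le : ∑ i, Complex.normSq (c i) ≤ 1 := by
    have := nsq_nonneg h
    linarith [hnsq ▸ this]
  have hci : ∀ i, ‖c i‖ ≤ 1 := by
    intro i
    have h1 : Complex.normSq (c i) ≤ 1 :=
      le_trans (Finset.single_le_sum (fun j _ => Complex.normSq_nonneg _)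
        (Finset.mem_univ i)) hsum_le
    have h2 : ‖c i‖ ^ 2 = Complex.normSq (c i) := by
      rw [Complex.sq_norm]
    nlinarith [norm_nonneg (c i)]
  -- the integral of h against μ
  have hLh : ∫ s, h s ∂μ = (∫ s, g s ∂μ) - ∑ i, c i * ∫ s, F i s ∂μ := by
    have hintsum : Integrable (fun s => ∑ i, c i * F i s) μ :=
      integrable_cont (continuous_finset_sum _ fun i _ =>
        continuous_const.mul (F i).continuous) μ
    calc ∫ s, h s ∂μ = ∫ s, (g s - ∑ i, c i * F i s) ∂μ := by
          congr 1
          ext s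
          simp [hh]
      _ = (∫ s, g s ∂μ) - ∫ s, ∑ i, c i * F i s ∂μ :=
          integral_sub (integrable_cont g.continuous μ) hintsum
      _ = (∫ s, g s ∂μ) - ∑ i, c i * ∫ s, F i s ∂μ := by
          rw [integral_finset_sum (f := fun i s => c i * F i s) _ fun i _ =>
            (integrable_cont (continuous_const.mul (F i).continuous) μ :
              Integrable (fun s => c i * F i s) μ)]
          congr 1
          exact Finset.sum_congr rfl fun i _ => integral_const_mul _ _
  have hnorm : 1 ≤ ‖∫ s, h s ∂μ‖ := by
    have h1 : ‖∑ i, c i * ∫ s, F i s ∂μ‖ ≤ S := by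
      calc ‖∑ i, c i * ∫ s, F i s ∂μ‖ ≤ ∑ i, ‖c i * ∫ s, F i s ∂μ‖ :=
            norm_sum_le _ _
        _ = ∑ i, ‖c i‖ * ‖∫ s, F i s ∂μ‖ := by simp [norm_mul]
        _ ≤ ∑ i, 1 * ‖∫ s, F i s ∂μ‖ := Finset.sum_le_sum fun i _ =>
            mul_le_mul_of_nonneg_right (hci i) (norm_nonneg _)
        _ = S := by simp [hS]
    calc (1 : ℝ) = (S + 1) - S := by ring
      _ ≤ ‖∫ s, g s ∂μ‖ - ‖∑ i, c i * ∫ s, F i s ∂μ‖ := sub_le_sub hgM h1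
      _ ≤ ‖(∫ s, g s ∂μ) - ∑ i, c i * ∫ s, F i s ∂μ‖ := norm_sub_norm_le _ _
      _ = ‖∫ s, h s ∂μ‖ := by rw [hLh]
  have hne : ∃ x, h x ≠ 0 := by
    by_contra hz
    push_neg at hz
    have : ∫ s, h s ∂μ = 0 := by simp [hz]
    rw [this, norm_zero] at hnorm
    linarith
  have hpos : 0 < nsq h := nsq_pos h hne
  have hle1 : nsq h ≤ 1 := by rw [hnsq]; linarith
  set N : ℝ := Real.sqrt (nsq h) with hNdef
  have hNpos : 0 < N := Real.sqrt_pos.mpr hpos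
  have hNle1 : N ≤ 1 := by
    rw [hNdef, show (1:ℝ) = Real.sqrt 1 by simp]
    exact Real.sqrt_le_sqrt hle1
  have hNN : N * N = nsq h := Real.mul_self_sqrt hpos.le
  have hNinv : 1 ≤ N⁻¹ := by
    have := mul_inv_cancel₀ hNpos.ne'
    nlinarith [inv_nonneg.mpr hNpos.le]
  set g' : C(I, ℂ) := ((N⁻¹ : ℝ) : ℂ) • h with hg'
  have hLg' : ∫ s, g' s ∂μ = ((N⁻¹ : ℝ) : ℂ) * ∫ s, h s ∂μ := by
    simp only [hg', ContinuousMap.smul_apply, smul_eq_mul]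
    exact integral_const_mul _ _
  refine ⟨g', ?_, ?_⟩
  · intro i j
    induction i using Fin.lastCases with
    | last =>
      induction j using Fin.lastCases with
      | last =>
        simp only [Fin.snoc_last, if_pos rfl]
        rw [hg', ip_smul_left, ip_smul_right, ip_self h, Complex.conj_ofReal]
        rw [← Complex.ofReal_mul, ← Complex.ofReal_mul, ← Complex.ofReal_one]
        congr 1
        field_simp
        linarith
      | cast j =>
        have hne' : Fin.last n ≠ j.castSucc := (Fin.castSucc_lt_last j).ne'
        simp only [Fin.snoc_last, Fin.snoc_castSucc, if_neg hne']
        rw [hg', ip_smul_left, hhF j, mul_zero]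
    | cast i =>
      induction j using Fin.lastCases with
      | last =>
        have hne' : i.castSucc ≠ Fin.last n := (Fin.castSucc_lt_last i).ne
        simp only [Fin.snoc_last, Fin.snoc_castSucc, if_neg hne']
        rw [hg', ip_smul_right, hFh i, mul_zero]
      | cast j =>
        simp only [Fin.snoc_castSucc]
        rw [horth]
        congr 1
        simp [Fin.castSucc_inj]
  · intro i
    induction i using Fin.lastCases with
    | last =>
      rw [Fin.snoc_last, hLg', norm_mul, Complex.norm_real, Real.norm_eq_abs,
        abs_of_nonneg (inv_nonneg.mpr hNpos.le)]
      calc (1 : ℝ) = 1 * 1 := by ring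
        _ ≤ N⁻¹ * ‖∫ s, h s ∂μ‖ := mul_le_mul hNinv hnorm zero_le_one (by linarith)
    | cast i =>
      rw [Fin.snoc_castSucc]
      exact hbig i

/-- The recursively constructed orthonormal families. -/
def seqAux (μ : Measure I) [IsFiniteMeasure μ]
    (hU : ∀ M : ℝ, ∃ g : C(I, ℂ), ip g g = 1 ∧ M ≤ ‖∫ s, g s ∂μ‖) :
    ∀ n : ℕ, {F : Fin n → C(I, ℂ) // Good μ n F}
  | 0 => ⟨fun i => i.elim0, fun i => i.elim0, fun i => i.elim0⟩
  | n + 1 =>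
    ⟨Fin.snoc (seqAux μ hU n).1 (extend_step μ hU (seqAux μ hU n).2).choose,
      (extend_step μ hU (seqAux μ hU n).2).choose_spec⟩

/-- The infinite orthonormal sequence. -/
def theSeq (μ : Measure I) [IsFiniteMeasure μ]
    (hU : ∀ M : ℝ, ∃ g : C(I, ℂ), ip g g = 1 ∧ M ≤ ‖∫ s, g s ∂μ‖) (k : ℕ) : C(I, ℂ) :=
  (seqAux μ hU (k + 1)).1 (Fin.last k)

lemma seqAux_eq (μ : Measure I) [IsFiniteMeasure μ]
    (hU : ∀ M : ℝ, ∃ g : C(I, ℂ), ip g g = 1 ∧ M ≤ ‖∫ s, g s ∂μ‖) :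
    ∀ (n k : ℕ) (hk : k < n), (seqAux μ hU n).1 ⟨k, hk⟩ = theSeq μ hU k := by
  intro n
  induction n with
  | zero => exact fun k hk => absurd hk (Nat.not_lt_zero k)
  | succ n ih =>
    intro k hk
    rcases Nat.lt_succ_iff_lt_or_eq.mp hk with h | h
    · have e : (⟨k, hk⟩ : Fin (n + 1)) = (⟨k, h⟩ : Fin n).castSucc := rfl
      rw [e, show (seqAux μ hU (n + 1)).1 = Fin.snoc (seqAux μ hU n).1
        (extend_step μ hU (seqAux μ hU n).2).choose from rfl, Fin.snoc_castSucc]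
      exact ih k h
    · subst h
      rfl

lemma theSeq_orthonormal (μ : Measure I) [IsFiniteMeasure μ]
    (hU : ∀ M : ℝ, ∃ g : C(I, ℂ), ip g g = 1 ∧ M ≤ ‖∫ s, g s ∂μ‖) (j k : ℕ) :
    ip (theSeq μ hU j) (theSeq μ hU k) = if j = k then 1 else 0 := by
  have hj : j < max j k + 1 := lt_of_le_of_lt (le_max_left j k) (Nat.lt_succ_self _)
  have hk : k < max j k + 1 := lt_of_le_of_lt (le_max_right j k) (Nat.lt_succ_self _)
  rw [← seqAux_eq μ hU (max j k + 1) j hj, ← seqAux_eq μ hU (max j k + 1) k hk,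
    (seqAux μ hU (max j k + 1)).2.1 ⟨j, hj⟩ ⟨k, hk⟩]
  congr 1
  simp [Fin.ext_iff]

lemma theSeq_big (μ : Measure I) [IsFiniteMeasure μ]
    (hU : ∀ M : ℝ, ∃ g : C(I, ℂ), ip g g = 1 ∧ M ≤ ‖∫ s, g s ∂μ‖) (k : ℕ) :
    1 ≤ ‖∫ s, theSeq μ hU k s ∂μ‖ :=
  (seqAux μ hU (k + 1)).2.2 (Fin.last k)

lemma key (μ : Measure I) [IsFiniteMeasure μ]
    (H : ∃ C : ℝ, ∀ f : ℕ → C(I, ℂ), OrthonormalSeq f →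
      ∀ n : ℕ, ∑ k ∈ Finset.range n, ‖∫ s, f k s ∂μ‖ ^ 2 ≤ C) :
    μ ≪ (volume : Measure I) := by
  by_contra hns
  have hU := claimU μ hns
  obtain ⟨C, hC⟩ := H
  have hons : OrthonormalSeq (theSeq μ hU) := fun j k => theSeq_orthonormal μ hU j k
  obtain ⟨n, hn⟩ := exists_nat_gt C
  have hsum := hC (theSeq μ hU) hons n
  have hlb : (n : ℝ) ≤ ∑ k ∈ Finset.range n, ‖∫ s, theSeq μ hU k s ∂μ‖ ^ 2 := by
    calc (n : ℝ) = ∑ _k ∈ Finset.range n, (1 : ℝ) := by simp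
      _ ≤ ∑ k ∈ Finset.range n, ‖∫ s, theSeq μ hU k s ∂μ‖ ^ 2 :=
        Finset.sum_le_sum fun k _ => by nlinarith [theSeq_big μ hU k]
  linarith

end KBF

end


/-- Let `κ` be a finite kernel from `[0,1]` to `[0,1]`.  If for `λ`-a.e. `t` the sums
`∑ₖ |∫ f_k dκ_t|²` over orthonormal sequences of continuous functions are bounded by a
constant `C_t`, then the measure `λ ⊗ κ` on the square is absolutely continuous with
respect to the product measure `λ ⊗ λ`. -/
theorem kernel_bounded_fourier_sums_implies_ac (κ : Kernel I I) [IsFiniteKernel κ]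
    (hfib : ∀ᵐ t ∂(volume : Measure I), ∃ C : ℝ,
      ∀ f : ℕ → C(I, ℂ), OrthonormalSeq f →
        ∀ n : ℕ, ∑ k ∈ Finset.range n, ‖∫ s, f k s ∂(κ t)‖ ^ 2 ≤ C) :
    ((volume : Measure I) ⊗ₘ κ) ≪ (volume : Measure I).prod (volume : Measure I) := by
  have hae : ∀ᵐ t ∂(volume : Measure I), κ t ≪ (volume : Measure I) := by
    filter_upwards [hfib] with t ht
    exact KBF.key (κ t) ht
  have h2 : ((volume : Measure I) ⊗ₘ κ) ≪
      ((volume : Measure I) ⊗ₘ (Kernel.const I (volume : Measure I))) :=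
    Measure.AbsolutelyContinuous.compProd_right
      (by filter_upwards [hae] with t ht; simpa using ht)
  rwa [Measure.compProd_const] at h2
end

section
/- Let η be a finite Borel measure on [0,1]×[0,1] such that ∫ a(t)·e^{2πi n s} dη(t,s) = 0 for every continuous function a : [0,1] → ℂ and every nonzero integer n. Then η is the product of its first marginal with Lebesgue measure: η = η₁ ⊗ λ, where η₁ is the Borel measure on [0,1] given by η₁(E) = η(E × [0,1]) and λ is Lebesgue measure on [0,1]. -/
open MeasureTheory unitInterval Complex Set
open scoped ENNReal

noncomputable section

namespace VFIP

abbrev 𝕊 : Type := UnitAddCircle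

def φ : I → 𝕊 := fun x => ((x : ℝ) : 𝕊)

lemma continuous_φ : Continuous φ := (AddCircle.continuous_mk' 1).comp continuous_subtype_val

lemma measurable_φ : Measurable φ := continuous_φ.measurable

section Compact

variable {X : Type*} [MeasurableSpace X] [TopologicalSpace X] [CompactSpace X]
  [OpensMeasurableSpace X]

lemma integrable_cm (μ : Measure X) [IsFiniteMeasure μ] (f : C(X, ℂ)) :
    Integrable f μ := by
  exact (BoundedContinuousFunction.mkOfCompact f).integrable μ

lemma continuous_integral_cm (μ : Measure X) [IsFiniteMeasure μ] :
    Continuous fun f : C(X, ℂ) => ∫ x, f x ∂μ := by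
  have : LipschitzWith (μ Set.univ).toNNReal (fun f : C(X, ℂ) => ∫ x, f x ∂μ) := by
    refine LipschitzWith.of_dist_le_mul fun f g => ?_
    rw [dist_eq_norm, ← integral_sub (integrable_cm μ f) (integrable_cm μ g)]
    have hb : ∀ x, ‖f x - g x‖ ≤ dist f g := fun x => by
      rw [← dist_eq_norm]; exact ContinuousMap.dist_apply_le_dist x
    calc ‖∫ x, (f x - g x) ∂μ‖ ≤ dist f g * (μ Set.univ).toReal :=
          norm_integral_le_of_norm_le_const (Filter.Eventually.of_forall hb)
      _ = ((μ Set.univ).toNNReal : ℝ) * dist f g := by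
          rw [mul_comm]; rfl
  exact this.continuous

lemma ext_of_integral_cm [HasOuterApproxClosed X] [BorelSpace X]
    {μ ν : Measure X} [IsFiniteMeasure μ] [IsFiniteMeasure ν]
    (h : ∀ f : C(X, ℂ), ∫ x, f x ∂μ = ∫ x, f x ∂ν) : μ = ν := by
  apply ext_of_forall_lintegral_eq_of_IsFiniteMeasure
  intro f
  have hcR : Continuous fun x => ((f x : ℝ)) := NNReal.continuous_coe.comp f.continuous
  have h2 := h ⟨fun x => ((f x : ℝ) : ℂ), Complex.continuous_ofReal.comp hcR⟩
  simp only [ContinuousMap.coe_mk] at h2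
  have h3 : ∫ x, (f x : ℝ) ∂μ = ∫ x, (f x : ℝ) ∂ν := by
    have h4 := (integral_ofReal (𝕜 := ℂ) (f := fun x => (f x : ℝ)) (μ := μ)).symm.trans
      (h2.trans (integral_ofReal (𝕜 := ℂ) (f := fun x => (f x : ℝ)) (μ := ν)))
    exact_mod_cast h4
  have hint : ∀ (ρ : Measure X) [IsFiniteMeasure ρ], Integrable (fun x => (f x : ℝ)) ρ := by
    intro ρ _
    exact (BoundedContinuousFunction.mkOfCompact ⟨fun x => (f x : ℝ), hcR⟩).integrable ρ
  rw [lintegral_coe_eq_integral _ (hint μ), lintegral_coe_eq_integral _ (hint ν), h3]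

end Compact

lemma ext_of_fourier {μ ν : Measure 𝕊} [IsFiniteMeasure μ] [IsFiniteMeasure ν]
    (h : ∀ n : ℤ, ∫ z, fourier n z ∂μ = ∫ z, fourier n z ∂ν) : μ = ν := by
  apply ext_of_integral_cm
  intro f
  have hS : IsClosed {g : C(𝕊, ℂ) | ∫ z, g z ∂μ = ∫ z, g z ∂ν} :=
    isClosed_eq (continuous_integral_cm μ) (continuous_integral_cm ν)
  set S : Submodule ℂ C(𝕊, ℂ) :=
    { carrier := {g : C(𝕊, ℂ) | ∫ z, g z ∂μ = ∫ z, g z ∂ν}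
      add_mem' := fun {g} {g'} hg hg' => by
        simp only [Set.mem_setOf_eq, ContinuousMap.add_apply] at *
        rw [integral_add (integrable_cm μ g) (integrable_cm μ g'),
          integral_add (integrable_cm ν g) (integrable_cm ν g'), hg, hg']
      zero_mem' := by simp
      smul_mem' := fun c g hg => by
        simp only [Set.mem_setOf_eq, ContinuousMap.smul_apply] at *
        rw [integral_smul, integral_smul, hg] } with hSdef
  have hspan : Submodule.span ℂ (Set.range (@fourier 1)) ≤ S := by
    rw [Submodule.span_le]
    rintro _ ⟨n, rfl⟩
    exact h n
  have hle : (Submodule.span ℂ (Set.range (@fourier 1))).topologicalClosure ≤ S :=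
    Submodule.topologicalClosure_minimal _ hspan hS
  rw [span_fourier_closure_eq_top] at hle
  exact hle Submodule.mem_top

lemma integral_fourier_map (μ : Measure I) (n : ℤ) :
    ∫ z, fourier n z ∂(μ.map φ)
      = ∫ x : I, Complex.exp (2 * Real.pi * Complex.I * (n : ℂ) * ((x : ℝ) : ℂ)) ∂μ := by
  rw [integral_map measurable_φ.aemeasurable
    ((map_continuous (fourier n)).aestronglyMeasurable)]
  refine integral_congr_ae (Filter.Eventually.of_forall fun x => ?_)
  show fourier n ((((x : ℝ)) : 𝕊)) = _
  rw [fourier_coe_apply]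
  norm_num

lemma exp_two_pi_I_int_ne (n : ℤ) (hn : n ≠ 0) :
    (2 * (Real.pi : ℂ) * Complex.I * (n : ℂ)) ≠ 0 := by
  have h1 : (Real.pi : ℂ) ≠ 0 := Complex.ofReal_ne_zero.mpr Real.pi_ne_zero
  have h2 : (n : ℂ) ≠ 0 := Int.cast_ne_zero.mpr hn
  simp [Complex.I_ne_zero, h1, h2]

lemma integral_exp_volume (n : ℤ) (hn : n ≠ 0) :
    ∫ x : I, Complex.exp (2 * Real.pi * Complex.I * (n : ℂ) * ((x : ℝ) : ℂ))
      ∂(volume : Measure I) = 0 := by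
  have h0 : (volume : Measure I) = (volume : Measure ℝ).comap Subtype.val :=
    unitInterval.volume_def
  rw [h0]
  rw [integral_subtype_comap measurableSet_Icc
    (fun x : ℝ => Complex.exp (2 * Real.pi * Complex.I * (n : ℂ) * (x : ℂ)))]
  rw [MeasureTheory.integral_Icc_eq_integral_Ioc,
    ← intervalIntegral.integral_of_le (zero_le_one)]
  have hc := exp_two_pi_I_int_ne n hn
  have := integral_exp_mul_complex (a := 0) (b := 1) hc
  simp only [Complex.ofReal_one, Complex.ofReal_zero, mul_one, mul_zero, Complex.exp_zero] at this
  rw [show (fun x : ℝ => Complex.exp (2 * Real.pi * Complex.I * (n : ℂ) * (x : ℂ)))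
    = fun x : ℝ => Complex.exp ((2 * (Real.pi : ℂ) * Complex.I * (n : ℂ)) * (x : ℂ)) from rfl,
    this]
  rw [show (2 * (Real.pi : ℂ) * Complex.I * (n : ℂ)) = (n : ℂ) * (2 * Real.pi * Complex.I) by
    ring]
  simp [Complex.exp_int_mul_two_pi_mul_I]


lemma coeff_indicator (η : Measure (I × I)) [IsFiniteMeasure η]
    (h : ∀ a : C(I, ℂ), ∀ n : ℤ, n ≠ 0 →
      (∫ p : I × I, a p.1 *
        Complex.exp (2 * Real.pi * Complex.I * (n : ℂ) * ((p.2 : ℝ) : ℂ)) ∂η) = 0)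
    {E : Set I} (hE : MeasurableSet E) (n : ℤ) (hn : n ≠ 0) :
    ∫ p : I × I, E.indicator (fun _ => (1 : ℂ)) p.1 *
      Complex.exp (2 * Real.pi * Complex.I * (n : ℂ) * ((p.2 : ℝ) : ℂ)) ∂η = 0 := by
  set e : I × I → ℂ :=
    fun p => Complex.exp (2 * Real.pi * Complex.I * (n : ℂ) * ((p.2 : ℝ) : ℂ)) with he
  have he_cont : Continuous e := by
    apply Complex.continuous_exp.comp
    continuity
  have he_norm : ∀ p : I × I, ‖e p‖ = 1 := by
    intro p
    rw [he]
    have hrw : (2 * (Real.pi : ℂ) * Complex.I * (n : ℂ) * ((p.2 : ℝ) : ℂ))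
        = ((2 * Real.pi * n * (p.2 : ℝ) : ℝ) : ℂ) * Complex.I := by push_cast; ring
    simp only [hrw]
    exact Complex.norm_exp_ofReal_mul_I _
  set f : I → ℝ := E.indicator (fun _ => (1 : ℝ)) with hf
  have hind : ∀ t : I, E.indicator (fun _ => (1 : ℂ)) t = ((f t : ℝ) : ℂ) := by
    intro t; by_cases ht : t ∈ E <;> simp [hf, ht]
  set ρ : Measure I := η.map Prod.fst with hρ
  haveI : IsFiniteMeasure ρ := Measure.isFiniteMeasure_map η Prod.fst
  have hfint : Integrable f ρ := (integrable_const (1 : ℝ)).indicator hE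
  have hmeas_ind : Measurable fun p : I × I => E.indicator (fun _ => (1 : ℂ)) p.1 :=
    (measurable_const.indicator hE).comp measurable_fst
  have hint1 : Integrable (fun p : I × I => E.indicator (fun _ => (1 : ℂ)) p.1 * e p) η := by
    refine ⟨(hmeas_ind.mul he_cont.measurable).aestronglyMeasurable, ?_⟩
    apply HasFiniteIntegral.of_bounded (C := 1)
    refine Filter.Eventually.of_forall fun p => ?_
    rw [norm_mul, he_norm, mul_one]
    by_cases hp : p.1 ∈ E <;> simp [hp]
  suffices hs : ∀ ε : ℝ, 0 < ε →
      ‖∫ p : I × I, E.indicator (fun _ => (1 : ℂ)) p.1 * e p ∂η‖ ≤ ε by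
    rw [← norm_le_zero_iff]
    exact le_of_forall_pos_le_add fun ε hε => by simpa using hs ε hε
  intro ε hε
  obtain ⟨g, hg, -⟩ := hfint.exists_boundedContinuous_integral_sub_le hε
  set a : C(I, ℂ) := ⟨fun t => ((g t : ℝ) : ℂ),
    Complex.continuous_ofReal.comp g.continuous⟩ with ha
  have hz := h a n hn
  have hint2 : Integrable (fun p : I × I => a p.1 * e p) η := by
    have hcont : Continuous fun p : I × I => a p.1 * e p :=
      ((map_continuous a).comp continuous_fst).mul he_cont
    exact (BoundedContinuousFunction.mkOfCompact ⟨_, hcont⟩).integrable η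
  have key : ∫ p : I × I, E.indicator (fun _ => (1 : ℂ)) p.1 * e p ∂η
      = ∫ p : I × I, (E.indicator (fun _ => (1 : ℂ)) p.1 - a p.1) * e p ∂η := by
    rw [show (fun p : I × I => (E.indicator (fun _ => (1 : ℂ)) p.1 - a p.1) * e p)
        = fun p : I × I => E.indicator (fun _ => (1 : ℂ)) p.1 * e p - a p.1 * e p from by
        funext p; ring]
    rw [integral_sub hint1 hint2, hz, sub_zero]
  rw [key]
  calc ‖∫ p : I × I, (E.indicator (fun _ => (1 : ℂ)) p.1 - a p.1) * e p ∂η‖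
      ≤ ∫ p : I × I, ‖(E.indicator (fun _ => (1 : ℂ)) p.1 - a p.1) * e p‖ ∂η :=
        norm_integral_le_integral_norm _
    _ = ∫ p : I × I, ‖f p.1 - g p.1‖ ∂η := by
        refine integral_congr_ae (Filter.Eventually.of_forall fun p => ?_)
        show ‖(E.indicator (fun _ => (1 : ℂ)) p.1 - a p.1) * e p‖ = ‖f p.1 - g p.1‖
        rw [norm_mul, he_norm, mul_one, hind]
        show ‖((f p.1 : ℝ) : ℂ) - ((g p.1 : ℝ) : ℂ)‖ = _
        rw [← Complex.ofReal_sub, Complex.norm_real]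
    _ = ∫ t : I, ‖f t - g t‖ ∂ρ := by
        rw [hρ, integral_map measurable_fst.aemeasurable]
        exact (((measurable_const.indicator hE).sub
          g.continuous.measurable).norm).aestronglyMeasurable
    _ ≤ ε := hg

lemma volume_I_endpoints_zero : (volume : Measure I) {x : I | φ x = 0} = 0 := by
  have hsub : {x : I | φ x = 0} ⊆ ({0, 1} : Set I) := by
    intro x hx
    simp only [mem_setOf_eq, φ] at hx
    rw [AddCircle.coe_eq_zero_iff] at hx
    obtain ⟨m, hm⟩ := hx
    have hm' : (m : ℝ) = (x : ℝ) := by simpa using hm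
    have h0 : (0 : ℝ) ≤ (m : ℝ) := by rw [hm']; exact x.2.1
    have h1 : (m : ℝ) ≤ 1 := by rw [hm']; exact x.2.2
    have hm0 : (0 : ℤ) ≤ m := by exact_mod_cast h0
    have hm1 : m ≤ 1 := by exact_mod_cast h1
    have : m = 0 ∨ m = 1 := by omega
    rcases this with rfl | rfl
    · left
      apply Subtype.ext
      simpa using hm'.symm
    · right
      apply Subtype.ext
      simpa using hm'.symm
  refine measure_mono_null hsub ?_
  rw [unitInterval.volume_def,
    (MeasurableEmbedding.subtype_coe measurableSet_Icc).comap_apply]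
  refine measure_mono_null (Set.image_subset_iff.mpr ?_)
    (Set.Finite.measure_zero ((Set.finite_singleton (1 : ℝ)).insert 0) volume)
  intro x hx
  simp only [Set.mem_insert_iff, Set.mem_singleton_iff, Set.mem_preimage] at hx ⊢
  rcases hx with rfl | rfl <;> simp

lemma one_mem_endpoints : ∀ x : I, (x : ℝ) = 1 → φ x = 0 := by
  intro x hx
  show (((x : ℝ)) : 𝕊) = 0
  rw [hx, AddCircle.coe_eq_zero_iff]
  exact ⟨1, by simp⟩

lemma slice_eq (η : Measure (I × I)) [IsFiniteMeasure η]
    (h : ∀ a : C(I, ℂ), ∀ n : ℤ, n ≠ 0 →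
      (∫ p : I × I, a p.1 *
        Complex.exp (2 * Real.pi * Complex.I * (n : ℂ) * ((p.2 : ℝ) : ℂ)) ∂η) = 0)
    {E F : Set I} (hE : MeasurableSet E) (hF : MeasurableSet F) :
    η (E ×ˢ F) = (η.map Prod.fst) E * volume F := by
  set c : ℝ≥0∞ := (η.map Prod.fst) E with hc
  have hc_ne : c ≠ ⊤ := by
    haveI : IsFiniteMeasure (η.map Prod.fst) := Measure.isFiniteMeasure_map η Prod.fst
    exact (measure_lt_top _ _).ne
  set μE : Measure I := (η.restrict (E ×ˢ (univ : Set I))).map Prod.snd with hμE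
  haveI : IsFiniteMeasure μE := Measure.isFiniteMeasure_map _ _
  set κ : Measure I := c • (volume : Measure I) with hκ
  haveI hκfin : IsFiniteMeasure κ := by
    constructor
    rw [hκ, Measure.smul_apply, smul_eq_mul]
    exact ENNReal.mul_lt_top hc_ne.lt_top (measure_lt_top _ _)
  have hmass : μE univ = κ univ := by
    rw [hμE, Measure.map_apply measurable_snd MeasurableSet.univ, Set.preimage_univ,
      Measure.restrict_apply_univ, hκ, Measure.smul_apply, smul_eq_mul, measure_univ, mul_one, hc,
      Measure.map_apply measurable_fst hE, ← Set.prod_univ]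
  have hcoeff : ∀ n : ℤ, n ≠ 0 →
      ∫ x : I, Complex.exp (2 * Real.pi * Complex.I * (n : ℂ) * ((x : ℝ) : ℂ)) ∂μE = 0 := by
    intro n hn
    have hec : Continuous fun p : I × I =>
        Complex.exp (2 * Real.pi * Complex.I * (n : ℂ) * ((p.2 : ℝ) : ℂ)) := by
      apply Complex.continuous_exp.comp
      continuity
    rw [hμE, integral_map measurable_snd.aemeasurable]
    swap
    · exact (Complex.continuous_exp.comp (by continuity)).aestronglyMeasurable
    rw [← integral_indicator (hE.prod MeasurableSet.univ)]
    rw [show ((E ×ˢ (univ : Set I)).indicator fun p : I × I =>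
          Complex.exp (2 * Real.pi * Complex.I * (n : ℂ) * ((p.2 : ℝ) : ℂ)))
        = fun p : I × I => E.indicator (fun _ => (1 : ℂ)) p.1 *
          Complex.exp (2 * Real.pi * Complex.I * (n : ℂ) * ((p.2 : ℝ) : ℂ)) from ?_]
    · exact coeff_indicator η h hE n hn
    · funext p
      by_cases hp : p.1 ∈ E <;> simp [Set.indicator, Set.mem_prod, hp]
  have hφeq : μE.map φ = κ.map φ := by
    apply ext_of_fourier
    intro n
    rcases eq_or_ne n 0 with rfl | hn
    · have huniv : (μE.map φ) univ = (κ.map φ) univ := by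
        rw [Measure.map_apply measurable_φ MeasurableSet.univ,
          Measure.map_apply measurable_φ MeasurableSet.univ, Set.preimage_univ, hmass]
      simp [fourier_zero, integral_const, Measure.real, huniv]
    · rw [integral_fourier_map, integral_fourier_map, hcoeff n hn, hκ,
        integral_smul_measure, integral_exp_volume n hn, smul_zero]
  set Z : Set I := φ ⁻¹' {0} with hZdef
  have hvolZ : (volume : Measure I) Z = 0 := by
    have : Z = {x : I | φ x = 0} := rfl
    rw [this]
    exact volume_I_endpoints_zero
  have hκZ : κ Z = 0 := by rw [hκ, Measure.smul_apply, hvolZ, smul_zero]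
  have hμEZ : μE Z = 0 := by
    have h1 : (μE.map φ) {(0 : 𝕊)} = (κ.map φ) {(0 : 𝕊)} := by rw [hφeq]
    rw [Measure.map_apply measurable_φ (measurableSet_singleton _),
      Measure.map_apply measurable_φ (measurableSet_singleton _)] at h1
    rw [hZdef] at *
    rw [h1]
    exact hκZ
  set ψ : 𝕊 → ℝ := fun z => ((AddCircle.measurableEquivIco 1 0 z :
    {t : ℝ // t ∈ Ico (0 : ℝ) (0 + 1)}) : ℝ) with hψ
  have hψm : Measurable ψ :=
    measurable_subtype_coe.comp (AddCircle.measurableEquivIco 1 0).measurable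
  have hψφ : ∀ x : I, (x : ℝ) ≠ 1 → ψ (φ x) = (x : ℝ) := by
    intro x hx
    have hmem : (x : ℝ) ∈ Ico (0 : ℝ) 1 := ⟨x.2.1, lt_of_le_of_ne x.2.2 hx⟩
    show ((AddCircle.equivIco 1 0 (((x : ℝ)) : 𝕊) : ℝ)) = (x : ℝ)
    rw [AddCircle.coe_equivIco_mk_apply]
    rw [div_one, mul_one]
    exact Int.fract_eq_self.mpr ⟨hmem.1, hmem.2⟩
  have hmapcongr : ∀ m : Measure I, m Z = 0 →
      m.map (Subtype.val : I → ℝ) = (m.map φ).map ψ := by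
    intro m hm
    rw [Measure.map_map hψm measurable_φ]
    apply Measure.map_congr
    rw [Filter.EventuallyEq, ae_iff]
    apply measure_mono_null _ hm
    intro x hx'
    simp only [mem_setOf_eq, Function.comp_apply] at hx'
    show φ x ∈ ({0} : Set 𝕊)
    simp only [mem_singleton_iff]
    by_contra hx0
    apply hx'
    by_cases hx1 : (x : ℝ) = 1
    · exact absurd (one_mem_endpoints x hx1) hx0
    · exact (hψφ x hx1).symm
  have hval : μE.map (Subtype.val : I → ℝ) = κ.map (Subtype.val : I → ℝ) := by
    rw [hmapcongr μE hμEZ, hmapcongr κ hκZ, hφeq]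
  have hmEmb : MeasurableEmbedding (Subtype.val : I → ℝ) :=
    MeasurableEmbedding.subtype_coe measurableSet_Icc
  have hFeq : μE F = κ F := by
    have h2 := congrArg (fun m : Measure ℝ => m (Subtype.val '' F)) hval
    simpa [hmEmb.map_apply, Set.preimage_image_eq F Subtype.val_injective] using h2
  have hμEF : μE F = η (E ×ˢ F) := by
    rw [hμE, Measure.map_apply measurable_snd hF,
      Measure.restrict_apply (measurable_snd hF)]
    congr 1
    ext p
    simp [Set.mem_prod, and_comm]
  have hκF : κ F = c * volume F := by rw [hκ, Measure.smul_apply, smul_eq_mul]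
  rw [← hμEF, hFeq, hκF]

end VFIP

open VFIP

/-- If a finite Borel measure `η` on `[0,1] × [0,1]` satisfies
`∫ a(t) e^{2πins} dη(t,s) = 0` for every continuous `a` and every nonzero integer `n`,
then `η` is the product of its first marginal with Lebesgue measure. -/
theorem vanishing_fourier_implies_product (η : Measure (I × I)) [IsFiniteMeasure η]
    (h : ∀ a : C(I, ℂ), ∀ n : ℤ, n ≠ 0 →
      (∫ p : I × I, a p.1 *
        Complex.exp (2 * Real.pi * Complex.I * (n : ℂ) * ((p.2 : ℝ) : ℂ)) ∂η) = 0) :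
    η = (η.map Prod.fst).prod (volume : Measure I) := by
  haveI : IsFiniteMeasure (η.map Prod.fst) := Measure.isFiniteMeasure_map η Prod.fst
  refine MeasureTheory.ext_of_generate_finite
    (Set.image2 (· ×ˢ ·) {s : Set I | MeasurableSet s} {t : Set I | MeasurableSet t})
    generateFrom_prod.symm isPiSystem_prod ?_ ?_
  · rintro _ ⟨E, hE, F, hF, rfl⟩
    rw [Measure.prod_prod]
    exact VFIP.slice_eq η h hE hF
  · rw [← Set.univ_prod_univ, Measure.prod_prod]
    exact VFIP.slice_eq η h MeasurableSet.univ MeasurableSet.univ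
end
end

section
/- Let g : [0,1] → ℂ be Lebesgue-integrable and suppose that C := sup{ |∫₀¹ a·g dλ| : a ∈ C([0,1],ℂ), ∫₀¹ |a|² dλ ≤ 1 } is finite. Then g ∈ L²([0,1],λ) and the L²-norm of g equals C. -/
open MeasureTheory unitInterval Filter
open scoped ENNReal NNReal BoundedContinuousFunction Topology

noncomputable def clampC (M : ℝ) (z : ℂ) : ℂ :=
  (max (-M) (min M z.re) : ℝ) + (max (-M) (min M z.im) : ℝ) * Complex.I

lemma clampC_re (M : ℝ) (z : ℂ) : (clampC M z).re = max (-M) (min M z.re) := by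
  simp [clampC]

lemma clampC_im (M : ℝ) (z : ℂ) : (clampC M z).im = max (-M) (min M z.im) := by
  simp [clampC]

lemma clampC_continuous (M : ℝ) : Continuous (clampC M) := by
  unfold clampC
  fun_prop

lemma clamp_real_abs_le {M x : ℝ} (hM : 0 ≤ M) : |max (-M) (min M x)| ≤ M := by
  rw [abs_le]
  constructor
  · exact le_max_left _ _
  · exact max_le (by linarith) (min_le_left _ _)

lemma clampC_norm_le {M : ℝ} (hM : 0 ≤ M) (z : ℂ) : ‖clampC M z‖ ≤ 2 * M := by
  have h := Complex.norm_le_abs_re_add_abs_im (clampC M z)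
  calc ‖clampC M z‖ ≤ |(clampC M z).re| + |(clampC M z).im| := h
    _ ≤ M + M := by
        rw [clampC_re, clampC_im]
        exact add_le_add (clamp_real_abs_le hM) (clamp_real_abs_le hM)
    _ = 2 * M := by ring

lemma clampC_eq_self {M : ℝ} {z : ℂ} (h : ‖z‖ ≤ M) : clampC M z = z := by
  have hre : |z.re| ≤ M := (Complex.abs_re_le_norm z).trans h
  have him : |z.im| ≤ M := (Complex.abs_im_le_norm z).trans h
  rw [abs_le] at hre him
  unfold clampC
  rw [min_eq_right hre.2, max_eq_right hre.1, min_eq_right him.2, max_eq_right him.1,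
    Complex.re_add_im]

lemma clamp_real_lip (M x y : ℝ) : |max (-M) (min M x) - max (-M) (min M y)| ≤ |x - y| := by
  have h1 : |max (-M) (min M x) - max (-M) (min M y)| ≤ |min M x - min M y| := by
    rw [max_comm (-M) (min M x), max_comm (-M) (min M y)]
    exact abs_max_sub_max_le_abs _ _ _
  refine h1.trans ?_
  have := abs_min_sub_min_le_max M x M y
  simpa using this

lemma clampC_lip (M : ℝ) (x y : ℂ) : ‖clampC M x - clampC M y‖ ≤ 2 * ‖x - y‖ := by
  have h := Complex.norm_le_abs_re_add_abs_im (clampC M x - clampC M y)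
  have hre : |(clampC M x - clampC M y).re| ≤ |x.re - y.re| := by
    rw [Complex.sub_re, clampC_re, clampC_re]; exact clamp_real_lip M _ _
  have him : |(clampC M x - clampC M y).im| ≤ |x.im - y.im| := by
    rw [Complex.sub_im, clampC_im, clampC_im]; exact clamp_real_lip M _ _
  have h1 : |x.re - y.re| ≤ ‖x - y‖ := by
    rw [← Complex.sub_re]; exact (Complex.abs_re_le_norm _)
  have h2 : |x.im - y.im| ≤ ‖x - y‖ := by
    rw [← Complex.sub_im]; exact (Complex.abs_im_le_norm _)
  calc ‖_‖ ≤ |(clampC M x - clampC M y).re| + |(clampC M x - clampC M y).im| := h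
    _ ≤ ‖x - y‖ + ‖x - y‖ := add_le_add (hre.trans h1) (him.trans h2)
    _ = 2 * ‖x - y‖ := by ring

lemma pairing_bound (g : I → ℂ) (hg : Integrable g volume) (S : Set ℝ)
    (hS : S = {r : ℝ | ∃ a : C(I, ℂ), (∫ t, ‖a t‖ ^ 2) ≤ 1 ∧ r = ‖∫ t, a t * g t‖})
    (hbdd : BddAbove S) (f : I → ℂ) (hfm : AEStronglyMeasurable f volume)
    (M : ℝ) (hM : 0 ≤ M) (hfb : ∀ t, ‖f t‖ ≤ M)
    (hf2 : (∫ t, ‖f t‖ ^ 2) ≤ 1) :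
    ‖∫ t, f t * g t‖ ≤ sSup S := by
  have hf2p : MemLp f 2 volume :=
    (memLp_top_of_bound hfm M (Filter.Eventually.of_forall hfb)).mono_exponent le_top
  have happrox : ∀ k : ℕ, ∃ b : I →ᵇ ℂ,
      eLpNorm (f - ⇑b) 2 volume ≤ (((k : ℕ) + 1 : ℕ) : ℝ≥0∞)⁻¹ ∧ MemLp (⇑b) 2 volume := by
    intro k
    exact hf2p.exists_boundedContinuous_eLpNorm_sub_le (by norm_num)
      (by simp)
  choose b hb _ using happrox
  set c : ℕ → I → ℂ := fun k t => clampC M (b k t) with hc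
  have hccont : ∀ k, Continuous (c k) := fun k => (clampC_continuous M).comp (b k).continuous
  have hcb : ∀ k t, ‖c k t‖ ≤ 2 * M := fun k t => clampC_norm_le hM _
  have hcf : ∀ k t, ‖c k t - f t‖ ≤ 2 * ‖b k t - f t‖ := by
    intro k t
    have h : c k t - f t = clampC M (b k t) - clampC M (f t) := by
      rw [clampC_eq_self (hfb t)]
    rw [h]
    exact clampC_lip M _ _
  have heLp : ∀ k, eLpNorm (c k - f) 2 volume ≤ 2 * (((k : ℕ) + 1 : ℕ) : ℝ≥0∞)⁻¹ := by
    intro k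
    have h1 : eLpNorm (c k - f) 2 volume ≤ eLpNorm (fun t => (2:ℝ) • (b k t - f t)) 2 volume := by
      apply eLpNorm_mono
      intro t
      rw [norm_smul, Real.norm_ofNat]
      exact hcf k t
    have h2 : eLpNorm (fun t => (2:ℝ) • (b k t - f t)) 2 volume
        = 2 * eLpNorm (fun t => b k t - f t) 2 volume := by
      rw [show (fun t => (2:ℝ) • (b k t - f t)) = (2:ℝ) • (fun t => b k t - f t) from rfl,
        eLpNorm_const_smul]
      rw [← ofReal_norm]; norm_num
    have h3 : eLpNorm (fun t => b k t - f t) 2 volume = eLpNorm (f - ⇑(b k)) 2 volume := by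
      rw [show (fun t => b k t - f t) = (⇑(b k) - f) from rfl, eLpNorm_sub_comm]
    refine h1.trans ?_
    rw [h2, h3]
    exact mul_le_mul_right (hb k) 2
  have htend : Tendsto (fun k => eLpNorm (c k - f) 2 volume) atTop (𝓝 0) := by
    have h0 : Tendsto (fun k : ℕ => ((((k : ℕ) + 1 : ℕ)) : ℝ≥0∞)⁻¹) atTop (𝓝 0) :=
      ENNReal.tendsto_inv_nat_nhds_zero.comp (tendsto_add_atTop_nat 1)
    have h0' : Tendsto (fun k : ℕ => 2 * ((((k : ℕ) + 1 : ℕ)) : ℝ≥0∞)⁻¹) atTop (𝓝 0) := by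
      have := ENNReal.Tendsto.const_mul (a := 2) h0 (Or.inr (by norm_num))
      simpa using this
    exact tendsto_of_tendsto_of_tendsto_of_le_of_le tendsto_const_nhds h0'
      (fun k => zero_le) heLp
  have hTIM : TendstoInMeasure volume c atTop f :=
    tendstoInMeasure_of_tendsto_eLpNorm (p := 2) (by norm_num)
      (fun k => (hccont k).aestronglyMeasurable) hfm htend
  obtain ⟨ns, hns, hae⟩ := hTIM.exists_seq_tendsto_ae
  have h1 : Tendsto (fun j => ∫ t, c (ns j) t * g t) atTop (𝓝 (∫ t, f t * g t)) := by
    apply tendsto_integral_of_dominated_convergence (fun t => 2 * M * ‖g t‖)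
      (fun j => ((hccont (ns j)).aestronglyMeasurable.mul hg.1))
      (hg.norm.const_mul (2 * M))
    · intro j
      apply Filter.Eventually.of_forall
      intro t
      simp only [Pi.mul_apply, norm_mul]
      exact mul_le_mul_of_nonneg_right (hcb _ t) (norm_nonneg _)
    · exact hae.mono fun t ht => ht.mul_const (g t)
  have h2 : Tendsto (fun j => ∫ t, ‖c (ns j) t‖ ^ 2) atTop (𝓝 (∫ t, ‖f t‖ ^ 2)) := by
    apply tendsto_integral_of_dominated_convergence (fun _ => (2 * M) ^ 2)
      (fun j => (((hccont (ns j)).norm.pow 2)).aestronglyMeasurable)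
      (integrable_const _)
    · intro j
      apply Filter.Eventually.of_forall
      intro t
      rw [Real.norm_eq_abs, abs_of_nonneg (sq_nonneg _)]
      exact pow_le_pow_left₀ (norm_nonneg _) (hcb _ t) 2
    · exact hae.mono fun t ht => (ht.norm).pow 2
  set Ik : ℕ → ℝ := fun j => ∫ t, ‖c (ns j) t‖ ^ 2 with hIk
  set s : ℕ → ℝ := fun j => max 1 (Real.sqrt (Ik j)) with hsdef
  have hs1 : ∀ j, (1:ℝ) ≤ s j := fun j => le_max_left _ _
  have hsp : ∀ j, (0:ℝ) < s j := fun j => lt_of_lt_of_le one_pos (hs1 j)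
  have hIk0 : ∀ j, 0 ≤ Ik j := fun j => integral_nonneg fun t => by positivity
  have hsq : ∀ j, Ik j ≤ (s j) ^ 2 := by
    intro j
    have h4 := Real.sq_sqrt (hIk0 j)
    nlinarith [le_max_right (1:ℝ) (Real.sqrt (Ik j)), Real.sqrt_nonneg (Ik j)]
  have hstend : Tendsto s atTop (𝓝 1) := by
    have h3 : Tendsto s atTop (𝓝 (max 1 (Real.sqrt (∫ t, ‖f t‖ ^ 2)))) :=
      tendsto_const_nhds.max ((Real.continuous_sqrt.tendsto _).comp h2)
    rwa [max_eq_left (Real.sqrt_le_one.2 hf2)] at h3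
  have hle : ∀ j, ‖∫ t, c (ns j) t * g t‖ ≤ s j * sSup S := by
    intro j
    set A : C(I, ℂ) := ⟨fun t => ((s j)⁻¹ : ℝ) • c (ns j) t,
      (hccont (ns j)).const_smul ((s j)⁻¹ : ℝ)⟩ with hA
    have hA1 : (∫ t, ‖A t‖ ^ 2) ≤ 1 := by
      have hpt : ∀ t, ‖A t‖ ^ 2 = ((s j)⁻¹) ^ 2 * ‖c (ns j) t‖ ^ 2 := by
        intro t
        show ‖((s j)⁻¹ : ℝ) • c (ns j) t‖ ^ 2 = _
        rw [norm_smul, Real.norm_eq_abs, mul_pow, sq_abs]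
      calc (∫ t, ‖A t‖ ^ 2) = ((s j)⁻¹) ^ 2 * Ik j := by
            simp_rw [hpt]; rw [integral_const_mul]
        _ ≤ ((s j)⁻¹) ^ 2 * (s j) ^ 2 := by
            exact mul_le_mul_of_nonneg_left (hsq j) (by positivity)
        _ = 1 := by field_simp; exact div_self (hsp j).ne'
    have hA2 : ‖∫ t, A t * g t‖ = (s j)⁻¹ * ‖∫ t, c (ns j) t * g t‖ := by
      have hpt : ∀ t, A t * g t = ((s j)⁻¹ : ℝ) • (c (ns j) t * g t) := by
        intro t
        show (((s j)⁻¹ : ℝ) • c (ns j) t) * g t = _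
        rw [smul_mul_assoc]
      simp_rw [hpt]
      rw [integral_smul, norm_smul, Real.norm_eq_abs, abs_of_nonneg (inv_nonneg.2 (hsp j).le)]
    have hmem : (s j)⁻¹ * ‖∫ t, c (ns j) t * g t‖ ∈ S := by
      rw [hS]
      exact ⟨A, hA1, hA2.symm⟩
    have h := le_csSup hbdd hmem
    calc ‖∫ t, c (ns j) t * g t‖ = s j * ((s j)⁻¹ * ‖∫ t, c (ns j) t * g t‖) := by
          field_simp; exact (mul_div_cancel_right₀ _ (hsp j).ne').symm
      _ ≤ s j * sSup S := mul_le_mul_of_nonneg_left h (hsp j).le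
  have hXt : Tendsto (fun j => ‖∫ t, c (ns j) t * g t‖) atTop (𝓝 ‖∫ t, f t * g t‖) := h1.norm
  have hYt : Tendsto (fun j => s j * sSup S) atTop (𝓝 (1 * sSup S)) := hstend.mul_const _
  have hfin := le_of_tendsto_of_tendsto' hXt hYt hle
  simpa using hfin

lemma eLpNorm_two_ofReal {h : I → ℂ} (hi : Integrable (fun t => ‖h t‖ ^ 2) volume) :
    eLpNorm h 2 volume = ENNReal.ofReal (Real.sqrt (∫ t, ‖h t‖ ^ 2)) := by
  rw [eLpNorm_eq_lintegral_rpow_enorm_toReal (by norm_num) (by norm_num)]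
  simp only [enorm_eq_nnnorm]
  have h1 : ∫⁻ t, (‖h t‖₊ : ℝ≥0∞) ^ (2 : ℝ≥0∞).toReal ∂volume
      = ENNReal.ofReal (∫ t, ‖h t‖ ^ 2) := by
    rw [ofReal_integral_eq_lintegral_ofReal hi (.of_forall fun t => by positivity)]
    apply lintegral_congr
    intro t
    rw [← enorm_eq_nnnorm, ← ofReal_norm]
    have h2e : (2 : ℝ≥0∞).toReal = ((2:ℕ):ℝ) := by norm_num
    rw [h2e, ENNReal.rpow_natCast, ← ENNReal.ofReal_pow (norm_nonneg _)]
  rw [h1]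
  have h2 : (0:ℝ) ≤ ∫ t, ‖h t‖ ^ 2 := integral_nonneg fun t => by positivity
  rw [ENNReal.ofReal_rpow_of_nonneg h2 (by norm_num), Real.sqrt_eq_rpow]
  norm_num

set_option maxHeartbeats 1000000 in
/-- If `g ∈ L¹([0,1])` and the supremum `C` of `|∫ a·g dλ|` over continuous `a` with
`∫|a|² dλ ≤ 1` is finite, then `g ∈ L²([0,1], λ)` and `‖g‖₂ = C`. -/
theorem duality_L2_norm (g : I → ℂ) (hg : Integrable g volume)
    (S : Set ℝ)
    (hS : S = {r : ℝ | ∃ a : C(I, ℂ), (∫ t, ‖a t‖ ^ 2) ≤ 1 ∧ r = ‖∫ t, a t * g t‖})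
    (hbdd : BddAbove S) :
    MemLp g 2 (volume : Measure I) ∧ (eLpNorm g 2 volume).toReal = sSup S := by
  have hzero_mem : (0:ℝ) ∈ S := by
    rw [hS]
    exact ⟨0, by simp, by simp⟩
  have hC0 : (0:ℝ) ≤ sSup S := le_csSup hbdd hzero_mem
  set g' := hg.1.mk g with hg'def
  have hg'm : StronglyMeasurable g' := hg.1.stronglyMeasurable_mk
  have hgg' : g =ᵐ[volume] g' := hg.1.ae_eq_mk
  set gn : ℕ → I → ℂ := fun n => Set.indicator {t | ‖g' t‖ ≤ (n:ℝ)} g' with hgndef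
  have hgnm : ∀ n, StronglyMeasurable (gn n) := fun n =>
    hg'm.indicator (measurableSet_le hg'm.measurable.norm measurable_const)
  have hgnb : ∀ n t, ‖gn n t‖ ≤ (n:ℝ) := by
    intro n t
    by_cases h : t ∈ {t : I | ‖g' t‖ ≤ (n:ℝ)}
    · simp only [hgndef, Set.indicator_of_mem h]; exact h
    · simp only [hgndef, Set.indicator_of_notMem h]; simp
  have hgn_le : ∀ n t, ‖gn n t‖ ≤ ‖g' t‖ := fun n t => norm_indicator_le_norm_self _ _
  have hgni : ∀ n, Integrable (fun t => ‖gn n t‖ ^ 2) volume := by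
    intro n
    refine (memLp_top_of_bound ((hgnm n).norm.pow 2).aestronglyMeasurable ((n:ℝ) ^ 2)
      (.of_forall fun t => ?_)).integrable le_top
    simp only [Pi.pow_apply, Real.norm_eq_abs, abs_pow, abs_norm]
    exact pow_le_pow_left₀ (norm_nonneg _) (hgnb n t) 2
  set In : ℕ → ℝ := fun n => ∫ t, ‖gn n t‖ ^ 2 with hIndef
  have hIn0 : ∀ n, 0 ≤ In n := fun n => integral_nonneg fun t => by positivity
  have hpair : ∀ n, ∫ t, (starRingEnd ℂ) (gn n t) * g t = ((In n : ℝ) : ℂ) := by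
    intro n
    have e1 : ∫ t, (starRingEnd ℂ) (gn n t) * g t = ∫ t, (starRingEnd ℂ) (gn n t) * g' t :=
      integral_congr_ae (hgg'.mono fun t ht => by simp only [ht])
    have e2 : ∀ t, (starRingEnd ℂ) (gn n t) * g' t = ((‖gn n t‖ ^ 2 : ℝ) : ℂ) := by
      intro t
      by_cases h : t ∈ {t : I | ‖g' t‖ ≤ (n:ℝ)}
      · have he' : gn n t = g' t := Set.indicator_of_mem h _
        rw [he', mul_comm, Complex.mul_conj]
        simp [Complex.normSq_eq_norm_sq]
      · have he' : gn n t = 0 := Set.indicator_of_notMem h _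
        rw [he']
        simp
    rw [e1]
    simp_rw [e2]
    exact integral_ofReal
  have hInC : ∀ n, In n ≤ (sSup S) ^ 2 := by
    intro n
    rcases eq_or_lt_of_le (hIn0 n) with h0 | hpos
    · rw [← h0]; positivity
    · set N := Real.sqrt (In n) with hNdef
      have hN : 0 < N := Real.sqrt_pos.2 hpos
      have hN2 : N ^ 2 = In n := Real.sq_sqrt (hIn0 n)
      set F : I → ℂ := fun t => (N⁻¹ : ℝ) • (starRingEnd ℂ) (gn n t) with hFdef
      have hFm : AEStronglyMeasurable F volume :=
        ((continuous_star.comp_stronglyMeasurable (hgnm n)).aestronglyMeasurable).const_smul (N⁻¹ : ℝ)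
      have hFb : ∀ t, ‖F t‖ ≤ N⁻¹ * n := by
        intro t
        rw [hFdef]
        simp only [norm_smul, Real.norm_eq_abs, abs_of_nonneg (inv_nonneg.2 hN.le),
          RCLike.norm_conj]
        exact mul_le_mul_of_nonneg_left (hgnb n t) (inv_nonneg.2 hN.le)
      have hF2 : (∫ t, ‖F t‖ ^ 2) = 1 := by
        have hpt : ∀ t, ‖F t‖ ^ 2 = (N⁻¹) ^ 2 * ‖gn n t‖ ^ 2 := by
          intro t
          rw [hFdef]
          simp only [norm_smul, Real.norm_eq_abs, RCLike.norm_conj, mul_pow, sq_abs]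
        simp_rw [hpt]
        rw [integral_const_mul]
        have hIe : (∫ t, ‖gn n t‖ ^ 2) = In n := by simp only [hIndef]
        rw [hIe, ← hN2]
        field_simp
      have key := pairing_bound g hg S hS hbdd F hFm (N⁻¹ * n) (by positivity) hFb
        (le_of_eq hF2)
      have hval : ∫ t, F t * g t = ((N⁻¹ * In n : ℝ) : ℂ) := by
        have hpt : ∀ t, F t * g t = (N⁻¹ : ℝ) • ((starRingEnd ℂ) (gn n t) * g t) := by
          intro t; rw [hFdef]; exact smul_mul_assoc _ _ _
        simp_rw [hpt]
        rw [integral_smul, hpair n, Complex.real_smul]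
        push_cast
        ring
      rw [hval] at key
      have h5 : ‖((N⁻¹ * In n : ℝ) : ℂ)‖ = N := by
        rw [Complex.norm_real, Real.norm_eq_abs, abs_of_nonneg (by positivity), ← hN2]
        field_simp
      rw [h5] at key
      calc In n = N ^ 2 := hN2.symm
        _ ≤ (sSup S) ^ 2 := pow_le_pow_left₀ hN.le key 2
  -- lintegral bound
  have hlin : ∫⁻ t, (‖g' t‖₊ : ℝ≥0∞) ^ (2:ℕ) ∂volume ≤ ENNReal.ofReal ((sSup S) ^ 2) := by
    have hmono : Monotone fun n : ℕ => fun t : I => (‖gn n t‖₊ : ℝ≥0∞) ^ (2:ℕ) := by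
      intro n m hnm
      intro t
      have hle : ‖gn n t‖ ≤ ‖gn m t‖ := by
        by_cases h : t ∈ {t : I | ‖g' t‖ ≤ (n:ℝ)}
        · have h' : t ∈ {t : I | ‖g' t‖ ≤ (m:ℝ)} :=
            Set.mem_setOf.2 (le_trans (Set.mem_setOf.1 h) (Nat.cast_le.2 hnm))
          have e1 : gn n t = g' t := Set.indicator_of_mem h _
          have e2 : gn m t = g' t := Set.indicator_of_mem h' _
          rw [e1, e2]
        · have e1 : gn n t = 0 := Set.indicator_of_notMem h _
          rw [e1]; simp
      show (‖gn n t‖₊ : ℝ≥0∞) ^ (2:ℕ) ≤ (‖gn m t‖₊ : ℝ≥0∞) ^ (2:ℕ)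
      gcongr
      exact_mod_cast hle
    have hsup : ∀ t, (⨆ n : ℕ, (‖gn n t‖₊ : ℝ≥0∞) ^ (2:ℕ)) = (‖g' t‖₊ : ℝ≥0∞) ^ (2:ℕ) := by
      intro t
      apply le_antisymm
      · apply iSup_le; intro n
        gcongr
        exact_mod_cast hgn_le n t
      · obtain ⟨n₀, hn₀⟩ := exists_nat_ge ‖g' t‖
        have hmem : t ∈ {t : I | ‖g' t‖ ≤ (n₀:ℝ)} := hn₀
        have he : gn n₀ t = g' t := Set.indicator_of_mem hmem _
        refine le_trans ?_ (le_iSup _ n₀)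
        rw [he]
    have hmeas : ∀ n, Measurable fun t => (‖gn n t‖₊ : ℝ≥0∞) ^ (2:ℕ) :=
      fun n => ((hgnm n).measurable.nnnorm.coe_nnreal_ennreal).pow_const 2
    calc ∫⁻ t, (‖g' t‖₊ : ℝ≥0∞) ^ (2:ℕ) ∂volume
        = ∫⁻ t, ⨆ n : ℕ, (‖gn n t‖₊ : ℝ≥0∞) ^ (2:ℕ) ∂volume :=
          lintegral_congr fun t => (hsup t).symm
      _ = ⨆ n, ∫⁻ t, (‖gn n t‖₊ : ℝ≥0∞) ^ (2:ℕ) ∂volume :=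
          lintegral_iSup hmeas (fun n m hnm t => hmono hnm t)
      _ ≤ ENNReal.ofReal ((sSup S) ^ 2) := by
          apply iSup_le
          intro n
          have heq : ∫⁻ t, (‖gn n t‖₊ : ℝ≥0∞) ^ (2:ℕ) ∂volume = ENNReal.ofReal (In n) := by
            have hIe : In n = ∫ t, ‖gn n t‖ ^ 2 := by simp only [hIndef]
            rw [hIe,
              ofReal_integral_eq_lintegral_ofReal (hgni n) (.of_forall fun t => by positivity)]
            apply lintegral_congr
            intro t
            rw [← enorm_eq_nnnorm, ← ofReal_norm, ← ENNReal.ofReal_pow (norm_nonneg _)]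
          rw [heq]
          exact ENNReal.ofReal_le_ofReal (hInC n)
  have help : eLpNorm g' 2 volume
      = (∫⁻ t, (‖g' t‖₊ : ℝ≥0∞) ^ (2:ℕ) ∂volume) ^ ((1:ℝ)/2) := by
    rw [eLpNorm_eq_lintegral_rpow_enorm_toReal (by norm_num) (by norm_num)]
    simp only [enorm_eq_nnnorm]
    have h2e : (2 : ℝ≥0∞).toReal = ((2:ℕ):ℝ) := by norm_num
    simp only [h2e, ENNReal.rpow_natCast]
    norm_num
  have hbound : eLpNorm g' 2 volume ≤ ENNReal.ofReal (sSup S) := by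
    rw [help]
    calc (∫⁻ t, (‖g' t‖₊ : ℝ≥0∞) ^ (2:ℕ) ∂volume) ^ ((1:ℝ)/2)
        ≤ (ENNReal.ofReal ((sSup S) ^ 2)) ^ ((1:ℝ)/2) :=
          ENNReal.rpow_le_rpow hlin (by norm_num)
      _ = ENNReal.ofReal (((sSup S) ^ 2) ^ ((1:ℝ)/2)) :=
          ENNReal.ofReal_rpow_of_nonneg (by positivity) (by norm_num)
      _ = ENNReal.ofReal (sSup S) := by
          rw [← Real.sqrt_eq_rpow, Real.sqrt_sq hC0]
  have hgmem : MemLp g 2 volume := by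
    refine ⟨hg.1, ?_⟩
    rw [eLpNorm_congr_ae hgg']
    exact lt_of_le_of_lt hbound ENNReal.ofReal_lt_top
  refine ⟨hgmem, ?_⟩
  apply le_antisymm
  · have h6 : eLpNorm g 2 volume ≤ ENNReal.ofReal (sSup S) := by
      rw [eLpNorm_congr_ae hgg']; exact hbound
    exact ENNReal.toReal_le_of_le_ofReal hC0 h6
  · apply csSup_le ⟨0, hzero_mem⟩
    rintro r hr
    rw [hS] at hr
    obtain ⟨a, ha1, rfl⟩ := hr
    have hconjcont : Continuous fun t => (starRingEnd ℂ) (a t) :=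
      continuous_star.comp a.continuous
    have hamem : MemLp (fun t => (starRingEnd ℂ) (a t)) 2 volume := by
      refine (memLp_top_of_bound hconjcont.aestronglyMeasurable ‖a‖
        (.of_forall fun t => ?_)).mono_exponent le_top
      rw [RCLike.norm_conj]
      exact a.norm_coe_le_norm t
    set A := hamem.toLp _ with hAdef
    set G := hgmem.toLp g with hGdef
    have hinner : (inner ℂ A G) = ∫ t, a t * g t := by
      rw [MeasureTheory.L2.inner_def]
      have hA := hamem.coeFn_toLp
      have hG := hgmem.coeFn_toLp
      calc ∫ t, (inner ℂ (A t) (G t))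
          = ∫ t, (inner ℂ ((starRingEnd ℂ) (a t)) (g t)) := by
            apply integral_congr_ae
            filter_upwards [hA, hG] with t h1 h2
            rw [h1, h2]
        _ = ∫ t, a t * g t := by
            apply integral_congr_ae
            apply Filter.Eventually.of_forall
            intro t
            simp only [RCLike.inner_apply, starRingEnd_self_apply]
            exact mul_comm _ _
    have haint : Integrable (fun t => ‖a t‖ ^ 2) volume := by
      refine (memLp_top_of_bound ((a.continuous.norm.pow 2).aestronglyMeasurable) (‖a‖ ^ 2)
        (.of_forall fun t => ?_)).integrable le_top
      simp only [Pi.pow_apply, Real.norm_eq_abs, abs_pow, abs_norm]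
      exact pow_le_pow_left₀ (norm_nonneg _) (a.norm_coe_le_norm t) 2
    have hnormA : ‖A‖ ≤ 1 := by
      rw [hAdef, MeasureTheory.Lp.norm_toLp]
      have he : eLpNorm (fun t => (starRingEnd ℂ) (a t)) 2 volume = eLpNorm (⇑a) 2 volume :=
        eLpNorm_congr_norm_ae (.of_forall fun t => RCLike.norm_conj _)
      rw [he, eLpNorm_two_ofReal haint]
      have h7 : Real.sqrt (∫ t, ‖a t‖ ^ 2) ≤ 1 := Real.sqrt_le_one.2 ha1
      calc (ENNReal.ofReal (Real.sqrt (∫ t, ‖a t‖ ^ 2))).toReal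
          ≤ (ENNReal.ofReal 1).toReal := by
            apply ENNReal.toReal_mono (by norm_num)
            exact ENNReal.ofReal_le_ofReal h7
        _ = 1 := by norm_num
    have hnormG : ‖G‖ = (eLpNorm g 2 volume).toReal := MeasureTheory.Lp.norm_toLp _ _
    calc ‖∫ t, a t * g t‖ = ‖(inner ℂ A G)‖ := by rw [hinner]
      _ ≤ ‖A‖ * ‖G‖ := norm_inner_le_norm A G
      _ ≤ 1 * (eLpNorm g 2 volume).toReal := by
          rw [hnormG]
          exact mul_le_mul_of_nonneg_right hnormA ENNReal.toReal_nonneg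
      _ = (eLpNorm g 2 volume).toReal := one_mul _
end

section
/- Let μ be a finite measure on a measurable space X, let (f_k) be a sequence of measurable functions f_k : X → ℂ with |f_k(x)| ≤ 1 for μ-almost every x, and let α ∈ ℂ with |α| = 1. If ∫ f_k dμ → α·μ(X) as k → ∞, then f_k converges to the constant function α in μ-measure, i.e., for every ε > 0, μ({x : |f_k(x) − α| ≥ ε}) → 0 as k → ∞. -/
open MeasureTheory Filter
open scoped Topology

/-- If `μ` is a finite measure, `(f_k)` are measurable functions with `|f_k| ≤ 1`
a.e., `|α| = 1`, and `∫ f_k dμ → α·μ(X)`, then `f_k → α` in `μ`-measure. -/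
theorem tendsto_const_in_measure_of_integral {X : Type*} [MeasurableSpace X]
    (μ : Measure X) [IsFiniteMeasure μ]
    (f : ℕ → X → ℂ) (hmeas : ∀ k, Measurable (f k))
    (hbd : ∀ k, ∀ᵐ x ∂μ, ‖f k x‖ ≤ 1)
    (α : ℂ) (hα : ‖α‖ = 1)
    (hconv : Tendsto (fun k => ∫ x, f k x ∂μ) atTop
      (𝓝 (α * ((μ Set.univ).toReal : ℂ)))) :
    TendstoInMeasure μ f atTop (fun _ => α) := by
  set g : ℕ → X → ℝ := fun k x => 1 - ((starRingEnd ℂ α) * f k x).re with hg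
  have hfint : ∀ k, Integrable (f k) μ := fun k =>
    Integrable.mono' (integrable_const (1 : ℝ)) (hmeas k).aestronglyMeasurable (hbd k)
  have hgmeas : ∀ k, Measurable (g k) := fun k =>
    measurable_const.sub ((Complex.measurable_re).comp (measurable_const.mul (hmeas k)))
  have hgnonneg : ∀ k, ∀ᵐ x ∂μ, 0 ≤ g k x := by
    intro k
    filter_upwards [hbd k] with x hx
    have h1 : ((starRingEnd ℂ α) * f k x).re ≤ ‖(starRingEnd ℂ α) * f k x‖ :=
      Complex.re_le_norm _
    have h2 : ‖(starRingEnd ℂ α) * f k x‖ = ‖f k x‖ := by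
      rw [norm_mul, RCLike.norm_conj, hα, one_mul]
    simp only [hg]
    linarith [h2 ▸ h1]
  have hgint : ∀ k, Integrable (g k) μ := by
    intro k
    exact (integrable_const (1 : ℝ)).sub
      (((hfint k).const_mul ((starRingEnd ℂ) α)).re)
  -- ∫ g k → 0
  have hInt_g : ∀ k, ∫ x, g k x ∂μ = (μ Set.univ).toReal -
      ((starRingEnd ℂ α) * ∫ x, f k x ∂μ).re := by
    intro k
    show ∫ x, (1 - ((starRingEnd ℂ α) * f k x).re) ∂μ = _
    have hre_int : Integrable (fun x => ((starRingEnd ℂ α) * f k x).re) μ :=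
      ((hfint k).const_mul _).re
    rw [integral_sub (integrable_const 1) hre_int]
    rw [integral_const, smul_eq_mul, mul_one]
    congr 1
    rw [← integral_const_mul]
    exact integral_re (((hfint k).const_mul _))
  have hlim : Tendsto (fun k => ∫ x, g k x ∂μ) atTop (𝓝 0) := by
    have h1 : Tendsto (fun k => ((starRingEnd ℂ α) * ∫ x, f k x ∂μ).re) atTop
        (𝓝 (((starRingEnd ℂ α) * (α * ((μ Set.univ).toReal : ℂ))).re)) :=
      (Complex.continuous_re.tendsto _).comp (hconv.const_mul _)
    have h2 : ((starRingEnd ℂ α) * (α * ((μ Set.univ).toReal : ℂ))).re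
        = (μ Set.univ).toReal := by
      have : (starRingEnd ℂ α) * α = ((‖α‖ : ℝ) : ℂ) ^ 2 := by
        rw [mul_comm, Complex.mul_conj']
      rw [← mul_assoc, this, hα]
      simp
    have := (tendsto_const_nhds (x := (μ Set.univ).toReal) (f := atTop)).sub h1
    rw [h2, sub_self] at this
    simpa only [hInt_g] using this
  rw [tendstoInMeasure_iff_dist]
  intro ε hε
  -- Chebyshev bound
  set c : ENNReal := ENNReal.ofReal (ε ^ 2 / 2) with hc
  have hc0 : c ≠ 0 := by
    simp [hc, ENNReal.ofReal_eq_zero, not_le]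
    positivity
  have hctop : c ≠ ⊤ := ENNReal.ofReal_ne_top
  have key : ∀ k, μ {x | ε ≤ dist (f k x) α} ≤ ENNReal.ofReal (∫ x, g k x ∂μ) / c := by
    intro k
    have hsub : {x | ε ≤ dist (f k x) α} ≤ᵐ[μ] {x | c ≤ ENNReal.ofReal (g k x)} := by
      filter_upwards [hbd k] with x hx hmem
      show c ≤ ENNReal.ofReal (g k x)
      rw [hc]
      apply ENNReal.ofReal_le_ofReal
      -- ε²/2 ≤ g k x
      have hdist : ε ≤ ‖f k x - α‖ := by rwa [← dist_eq_norm]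
      have hsq : ε ^ 2 ≤ ‖f k x - α‖ ^ 2 := by
        apply sq_le_sq' <;> nlinarith [norm_nonneg (f k x - α)]
      have hexp : ‖f k x - α‖ ^ 2 = ‖f k x‖ ^ 2 + ‖α‖ ^ 2
          - 2 * ((starRingEnd ℂ α) * f k x).re := by
        have e1 : ‖f k x - α‖ ^ 2 = Complex.normSq (f k x - α) := by
          rw [Complex.sq_norm]
        have e2 : ‖f k x‖ ^ 2 = Complex.normSq (f k x) := by
          rw [Complex.sq_norm]
        have e3 : ‖α‖ ^ 2 = Complex.normSq α := by
          rw [Complex.sq_norm]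
        rw [e1, e2, e3]
        simp only [Complex.normSq_apply, Complex.sub_re, Complex.sub_im, Complex.mul_re,
          Complex.conj_re, Complex.conj_im]
        ring
      have hf2 : ‖f k x‖ ^ 2 ≤ 1 := by nlinarith [norm_nonneg (f k x)]
      simp only [hg]
      nlinarith [hα]
    calc μ {x | ε ≤ dist (f k x) α} ≤ μ {x | c ≤ ENNReal.ofReal (g k x)} :=
          measure_mono_ae hsub
      _ ≤ (∫⁻ x, ENNReal.ofReal (g k x) ∂μ) / c :=
          meas_ge_le_lintegral_div ((hgmeas k).ennreal_ofReal.aemeasurable) hc0 hctop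
      _ = ENNReal.ofReal (∫ x, g k x ∂μ) / c := by
          rw [ofReal_integral_eq_lintegral_ofReal (hgint k) (hgnonneg k)]
  have hRHS : Tendsto (fun k => ENNReal.ofReal (∫ x, g k x ∂μ) / c) atTop (𝓝 0) := by
    have h1 : Tendsto (fun k => ENNReal.ofReal (∫ x, g k x ∂μ)) atTop (𝓝 0) := by
      have := (ENNReal.continuous_ofReal.tendsto 0).comp hlim
      simpa [Function.comp_def] using this
    have := ENNReal.Tendsto.div_const h1 (Or.inr hc0)
    simpa using this
  exact tendsto_of_tendsto_of_tendsto_of_le_of_le tendsto_const_nhds hRHS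
    (fun k => zero_le) key
end

section
/- Let μ be a finite Borel measure on [0,1] and let (n_k) be a strictly increasing sequence of positive integers such that the functions t ↦ e^{−2πi n_k t} converge in μ-measure to the constant e^{2πiθ} for some irrational number θ. Then μ is β-rigid for every β ∈ ℂ with |β| = 1: for each such β there exists a sequence (m_j) of nonzero integers with ∫₀¹ e^{−2πi m_j t} dμ(t) → β·μ([0,1]) as j → ∞. -/
open MeasureTheory Filter unitInterval
open scoped Topology

/-- Norm bound for difference of natural powers of unit vectors. -/
lemma norm_pow_sub_pow_aux (a b : ℂ) (ha : ‖a‖ = 1) (hb : ‖b‖ = 1) :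
    ∀ p : ℕ, ‖a ^ p - b ^ p‖ ≤ p * ‖a - b‖
  | 0 => by simp
  | (p + 1) => by
    have h1 : a ^ (p + 1) - b ^ (p + 1) = a ^ p * (a - b) + (a ^ p - b ^ p) * b := by ring
    calc ‖a ^ (p + 1) - b ^ (p + 1)‖
        ≤ ‖a ^ p * (a - b)‖ + ‖(a ^ p - b ^ p) * b‖ := by rw [h1]; exact norm_add_le _ _
      _ = ‖a - b‖ + ‖a ^ p - b ^ p‖ := by
          rw [norm_mul, norm_mul, norm_pow, ha, hb, one_pow, one_mul, mul_one]
      _ ≤ ‖a - b‖ + p * ‖a - b‖ := by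
          have := norm_pow_sub_pow_aux a b ha hb p; linarith
      _ = (p + 1 : ℕ) * ‖a - b‖ := by push_cast; ring

/-- Norm bound for difference of integer powers of unit vectors. -/
lemma norm_zpow_sub_zpow_aux (a b : ℂ) (ha : ‖a‖ = 1) (hb : ‖b‖ = 1) (p : ℤ) :
    ‖a ^ p - b ^ p‖ ≤ (p.natAbs : ℝ) * ‖a - b‖ := by
  have ha0 : a ≠ 0 := fun h => by simp [h] at ha
  have hb0 : b ≠ 0 := fun h => by simp [h] at hb
  cases p with
  | ofNat k => simpa using norm_pow_sub_pow_aux a b ha hb k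
  | negSucc k =>
    rw [zpow_negSucc, zpow_negSucc]
    have h1 : (a ^ (k + 1))⁻¹ - (b ^ (k + 1))⁻¹
        = (b ^ (k + 1) - a ^ (k + 1)) * ((a ^ (k + 1))⁻¹ * (b ^ (k + 1))⁻¹) := by
      field_simp
    rw [h1, norm_mul, norm_mul, norm_inv, norm_inv, norm_pow, norm_pow, ha, hb]
    simp only [one_pow, inv_one, mul_one]
    rw [norm_sub_rev]
    simpa using norm_pow_sub_pow_aux a b ha hb (k + 1)

/-- Density of `{pθ + q : p ≠ 0}` for irrational `θ`. -/
lemma exists_int_close (θ : ℝ) (hθ : Irrational θ) (x ε : ℝ) (hε : 0 < ε) :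
    ∃ p q : ℤ, p ≠ 0 ∧ |(p : ℝ) * θ + q - x| < ε := by
  set T : AddSubgroup ℝ :=
    { carrier := {y | ∃ p q : ℤ, y = (p : ℝ) * θ + q}
      zero_mem' := ⟨0, 0, by simp⟩
      add_mem' := by
        rintro a b ⟨p, q, rfl⟩ ⟨p', q', rfl⟩
        exact ⟨p + p', q + q', by push_cast; ring⟩
      neg_mem' := by
        rintro a ⟨p, q, rfl⟩
        exact ⟨-p, -q, by push_cast; ring⟩ } with hT
  have hdense : Dense (T : Set ℝ) := by
    rcases T.dense_or_cyclic with h | ⟨a, ha⟩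
    · exact h
    · exfalso
      have h1 : (1 : ℝ) ∈ T := ⟨0, 1, by simp⟩
      have hth : θ ∈ T := ⟨1, 0, by simp⟩
      rw [ha, AddSubgroup.mem_closure_singleton] at h1 hth
      obtain ⟨m, hm⟩ := h1
      obtain ⟨k, hk⟩ := hth
      rw [zsmul_eq_mul] at hm hk
      have hm0 : (m : ℝ) ≠ 0 := by
        intro h; rw [h, zero_mul] at hm; exact one_ne_zero hm.symm
      refine hθ ⟨(k : ℚ) / (m : ℚ), ?_⟩
      have haeq : a = 1 / (m : ℝ) := by field_simp at hm ⊢; linarith [hm]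
      rw [← hk, haeq]
      push_cast
      field_simp
  set r : ℝ := min ε 1 with hr
  have hr0 : 0 < r := lt_min hε one_pos
  have hrε : r ≤ ε := min_le_left _ _
  have hr1 : r ≤ 1 := min_le_right _ _
  -- find a small positive irrational element u of T
  obtain ⟨u, hu, huball⟩ := (Metric.dense_iff.mp hdense) (r / 2) (r / 4) (by linarith)
  obtain ⟨p₀, q₀, hu0⟩ := huball
  rw [Metric.mem_ball, Real.dist_eq] at hu
  have hu1 : r / 4 < u := by cases abs_lt.mp hu; linarith
  have hu2 : u < 3 * r / 4 := by cases abs_lt.mp hu; linarith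
  have hp₀ : p₀ ≠ 0 := by
    intro h
    rw [h] at hu0
    simp only [Int.cast_zero, zero_mul, zero_add] at hu0
    have h01 : (0 : ℝ) < q₀ := by rw [← hu0]; linarith
    have h02 : (q₀ : ℝ) < 1 := by rw [← hu0]; linarith
    have : (0 : ℤ) < q₀ := by exact_mod_cast h01
    have : (1 : ℤ) ≤ q₀ := this
    have : (1 : ℝ) ≤ (q₀ : ℝ) := by exact_mod_cast this
    linarith
  -- find an element t of T close to x
  obtain ⟨t, ht, htball⟩ := (Metric.dense_iff.mp hdense) x (r / 4) (by linarith)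
  obtain ⟨p, q, ht0⟩ := htball
  rw [Metric.mem_ball, Real.dist_eq] at ht
  by_cases hp : p = 0
  · refine ⟨p₀, q + q₀, hp₀, ?_⟩
    have : (p₀ : ℝ) * θ + (q + q₀ : ℤ) = t + u := by
      rw [ht0, hu0, hp]; push_cast; ring
    rw [this]
    have habs : |t - x| < r / 4 := ht
    have h1 : t + u - x = (t - x) + u := by ring
    rw [h1]
    calc |(t - x) + u| ≤ |t - x| + |u| := abs_add_le _ _
      _ < r / 4 + 3 * r / 4 := by
          apply add_lt_add habs
          rw [abs_of_pos (by linarith)]; exact hu2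
      _ = r := by ring
      _ ≤ ε := hrε
  · refine ⟨p, q, hp, ?_⟩
    rw [← ht0]
    calc |t - x| < r / 4 := ht
      _ ≤ ε := by linarith

/-- Density in the circle: powers of `e^{2πiθ}` with nonzero exponent approximate any
unit vector. -/
lemma exists_zpow_close (θ : ℝ) (hθ : Irrational θ) (β : ℂ) (hβ : ‖β‖ = 1)
    (ε : ℝ) (hε : 0 < ε) :
    ∃ p : ℤ, p ≠ 0 ∧ ‖Complex.exp (2 * Real.pi * Complex.I * (θ : ℂ)) ^ p - β‖ < ε := by
  have hπ : 0 < Real.pi := Real.pi_pos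
  set x : ℝ := β.arg / (2 * Real.pi) with hx
  set δ : ℝ := min (ε / (8 * Real.pi)) (1 / (4 * Real.pi)) with hδdef
  have hδ0 : 0 < δ := lt_min (by positivity) (by positivity)
  obtain ⟨p, q, hp, hpq⟩ := exists_int_close θ hθ x δ hδ0
  refine ⟨p, hp, ?_⟩
  have hβe : β = Complex.exp ((β.arg : ℂ) * Complex.I) := by
    conv_lhs => rw [← Complex.norm_mul_exp_arg_mul_I β]
    have : ‖β‖ = 1 := hβ
    rw [this]; simp
  set A : ℝ := 2 * Real.pi * ((p : ℝ) * θ + q) with hA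
  set B : ℝ := 2 * Real.pi * x with hB
  have hBarg : B = β.arg := by rw [hB, hx]; field_simp
  have key : Complex.exp (2 * Real.pi * Complex.I * (θ : ℂ)) ^ p
      = Complex.exp ((A : ℂ) * Complex.I) := by
    rw [← Complex.exp_int_mul]
    have h2 : (A : ℂ) * Complex.I
        = (p : ℂ) * (2 * Real.pi * Complex.I * (θ : ℂ)) + (q : ℂ) * (2 * Real.pi * Complex.I) := by
      rw [hA]; push_cast; ring
    rw [h2, Complex.exp_add, Complex.exp_int_mul_two_pi_mul_I, mul_one]
  have hβB : β = Complex.exp ((B : ℂ) * Complex.I) := by rw [hβe, hBarg]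
  rw [key, hβB]
  have hsplit : Complex.exp ((A : ℂ) * Complex.I) - Complex.exp ((B : ℂ) * Complex.I)
      = Complex.exp ((B : ℂ) * Complex.I) * (Complex.exp (((A - B : ℝ) : ℂ) * Complex.I) - 1) := by
    rw [mul_sub, mul_one, ← Complex.exp_add]
    congr 2
    push_cast; ring
  rw [hsplit, norm_mul]
  have h1 : ‖Complex.exp ((B : ℂ) * Complex.I)‖ = 1 := Complex.norm_exp_ofReal_mul_I B
  rw [h1, one_mul]
  have hABx : A - B = 2 * Real.pi * ((p : ℝ) * θ + q - x) := by rw [hA, hB]; ring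
  have habs : |A - B| < 2 * Real.pi * δ := by
    rw [hABx, abs_mul, abs_of_pos (by positivity : (0:ℝ) < 2 * Real.pi)]
    exact (mul_lt_mul_iff_right₀ (by positivity)).mpr hpq
  have hzn : ‖((A - B : ℝ) : ℂ) * Complex.I‖ = |A - B| := by
    rw [norm_mul, Complex.norm_I, Complex.norm_real, Real.norm_eq_abs, mul_one]
  have hle1 : ‖((A - B : ℝ) : ℂ) * Complex.I‖ ≤ 1 := by
    rw [hzn]
    have : 2 * Real.pi * δ ≤ 2 * Real.pi * (1 / (4 * Real.pi)) := by
      apply mul_le_mul_of_nonneg_left (min_le_right _ _) (by positivity)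
    have h2 : 2 * Real.pi * (1 / (4 * Real.pi)) = 1 / 2 := by field_simp; ring
    linarith
  calc ‖Complex.exp (((A - B : ℝ) : ℂ) * Complex.I) - 1‖
      ≤ 2 * ‖((A - B : ℝ) : ℂ) * Complex.I‖ := Complex.norm_exp_sub_one_le hle1
    _ = 2 * |A - B| := by rw [hzn]
    _ < 2 * (2 * Real.pi * δ) := by linarith
    _ ≤ 2 * (2 * Real.pi * (ε / (8 * Real.pi))) := by
        have := min_le_left (ε / (8 * Real.pi)) (1 / (4 * Real.pi))
        nlinarith
    _ = ε / 2 := by field_simp; ring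
    _ < ε := by linarith

/-- Convergence in measure is stable under integer powers of unit-norm functions. -/
lemma tendstoInMeasure_zpow {μ : Measure I} {f : ℕ → I → ℂ} {c : ℂ}
    (hf : ∀ k t, ‖f k t‖ = 1) (hc : ‖c‖ = 1)
    (h : TendstoInMeasure μ f atTop fun _ => c) {p : ℤ} (hp : p ≠ 0) :
    TendstoInMeasure μ (fun k t => f k t ^ p) atTop (fun _ => c ^ p) := by
  rw [tendstoInMeasure_iff_dist] at h ⊢
  intro ε hε
  have hpa : 0 < (p.natAbs : ℝ) := by exact_mod_cast Int.natAbs_pos.mpr hp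
  have hδ : 0 < ε / (p.natAbs : ℝ) := div_pos hε hpa
  refine tendsto_of_tendsto_of_tendsto_of_le_of_le tendsto_const_nhds (h _ hδ)
    (fun k => zero_le) (fun k => measure_mono fun t ht => ?_)
  simp only [Set.mem_setOf_eq] at ht ⊢
  rw [div_le_iff₀ hpa, mul_comm]
  calc ε ≤ dist (f k t ^ p) (c ^ p) := ht
    _ ≤ (p.natAbs : ℝ) * dist (f k t) c := by
        rw [dist_eq_norm, dist_eq_norm]
        exact norm_zpow_sub_zpow_aux _ _ (hf k t) hc p

/-- Bounded convergence in measure gives convergence of integrals. -/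
lemma tendsto_integral_of_tim {μ : Measure I} [IsFiniteMeasure μ] {F : ℕ → I → ℂ}
    (hFc : ∀ k, Continuous (F k)) (hFb : ∀ k t, ‖F k t‖ ≤ 1) {c : ℂ}
    (h : TendstoInMeasure μ F atTop fun _ => c) :
    Tendsto (fun k => ∫ t : I, F k t ∂μ) atTop (𝓝 (c * ((μ Set.univ).toReal : ℂ))) := by
  refine tendsto_of_subseq_tendsto fun ns hns => ?_
  have h' : TendstoInMeasure μ (fun i => F (ns i)) atTop fun _ => c :=
    fun ε hε => (h ε hε).comp hns
  obtain ⟨ms, _hms, hae⟩ := h'.exists_seq_tendsto_ae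
  refine ⟨ms, ?_⟩
  have hdc := tendsto_integral_of_dominated_convergence (μ := μ)
    (F := fun i => F (ns (ms i))) (f := fun _ => c) (bound := fun _ => 1)
    (fun i => (hFc _).aestronglyMeasurable) (integrable_const 1)
    (fun i => ae_of_all _ fun t => hFb _ _) hae
  rw [integral_const] at hdc
  simpa [smul_eq_mul, mul_comm, measureReal_def] using hdc

/-- If `μ` is a finite Borel measure on `[0,1]` and `e^{−2πi n_k t} → e^{2πiθ}` in
`μ`-measure along a strictly increasing sequence of positive integers `n_k`, with `θ`
irrational, then `μ` is `β`-rigid for every `β` on the unit circle: there are nonzero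
integers `m_j` with `∫ e^{−2πi m_j t} dμ(t) → β·μ([0,1])`. -/
theorem rigidity_from_irrational_limit (μ : Measure I) [IsFiniteMeasure μ]
    (n : ℕ → ℕ) (hmono : StrictMono n) (hpos : ∀ k, 0 < n k)
    (θ : ℝ) (hθ : Irrational θ)
    (hconv : TendstoInMeasure μ
      (fun k (t : I) => Complex.exp (-(2 * Real.pi * Complex.I * (n k : ℂ) * ((t : ℝ) : ℂ))))
      atTop (fun _ => Complex.exp (2 * Real.pi * Complex.I * (θ : ℂ)))) :
    ∀ β : ℂ, ‖β‖ = 1 → ∃ m : ℕ → ℤ, (∀ j, m j ≠ 0) ∧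
      Tendsto (fun j => ∫ t : I,
          Complex.exp (-(2 * Real.pi * Complex.I * (m j : ℂ) * ((t : ℝ) : ℂ))) ∂μ)
        atTop (𝓝 (β * ((μ Set.univ).toReal : ℂ))) := by
  intro β hβ
  set c : ℂ := Complex.exp (2 * Real.pi * Complex.I * (θ : ℂ)) with hc
  set M : ℝ := (μ Set.univ).toReal with hM
  have hM0 : 0 ≤ M := ENNReal.toReal_nonneg
  have hfn : ∀ k (t : I),
      ‖Complex.exp (-(2 * Real.pi * Complex.I * (n k : ℂ) * ((t : ℝ) : ℂ)))‖ = 1 := by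
    intro k t
    rw [show -(2 * Real.pi * Complex.I * (n k : ℂ) * ((t : ℝ) : ℂ))
        = ((-(2 * Real.pi * (n k : ℝ) * (t : ℝ)) : ℝ) : ℂ) * Complex.I by push_cast; ring]
    exact Complex.norm_exp_ofReal_mul_I _
  have hcn : ‖c‖ = 1 := by
    rw [hc, show 2 * Real.pi * Complex.I * (θ : ℂ)
        = ((2 * Real.pi * θ : ℝ) : ℂ) * Complex.I by push_cast; ring]
    exact Complex.norm_exp_ofReal_mul_I _
  have hex : ∀ j : ℕ, ∃ p : ℤ, p ≠ 0 ∧ ‖c ^ p - β‖ < 1 / ((j : ℝ) + 1) := fun j =>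
    exists_zpow_close θ hθ β hβ _ (by positivity)
  choose p hp hpβ using hex
  have htim : ∀ j, TendstoInMeasure μ
      (fun k (t : I) =>
        Complex.exp (-(2 * Real.pi * Complex.I * ((p j * (n k : ℤ) : ℤ) : ℂ) * ((t : ℝ) : ℂ))))
      atTop (fun _ => c ^ p j) := by
    intro j
    have heq : (fun k (t : I) =>
        Complex.exp (-(2 * Real.pi * Complex.I * ((p j * (n k : ℤ) : ℤ) : ℂ) * ((t : ℝ) : ℂ))))
        = fun k (t : I) =>
          Complex.exp (-(2 * Real.pi * Complex.I * (n k : ℂ) * ((t : ℝ) : ℂ))) ^ p j := by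
      funext k t
      rw [← Complex.exp_int_mul]
      congr 1
      push_cast; ring
    rw [heq]
    exact tendstoInMeasure_zpow hfn hcn hconv (hp j)
  have hint : ∀ j, Tendsto
      (fun k => ∫ t : I,
        Complex.exp (-(2 * Real.pi * Complex.I * ((p j * (n k : ℤ) : ℤ) : ℂ) * ((t : ℝ) : ℂ))) ∂μ)
      atTop (𝓝 (c ^ p j * (M : ℂ))) := by
    intro j
    refine tendsto_integral_of_tim (fun k => ?_) (fun k t => ?_) (htim j)
    · have hcont : Continuous fun t : I => ((t : ℝ) : ℂ) :=
        Complex.continuous_ofReal.comp continuous_subtype_val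
      exact Complex.continuous_exp.comp ((continuous_const.mul hcont).neg)
    · rw [show -(2 * Real.pi * Complex.I * ((p j * (n k : ℤ) : ℤ) : ℂ) * ((t : ℝ) : ℂ))
          = ((-(2 * Real.pi * ((p j * (n k : ℤ) : ℤ) : ℝ) * (t : ℝ)) : ℝ) : ℂ) * Complex.I by
        push_cast; ring]
      exact (Complex.norm_exp_ofReal_mul_I _).le
  have hK : ∀ j : ℕ, ∃ K : ℕ,
      dist (∫ t : I,
        Complex.exp (-(2 * Real.pi * Complex.I * ((p j * (n K : ℤ) : ℤ) : ℂ) * ((t : ℝ) : ℂ))) ∂μ)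
        (c ^ p j * (M : ℂ)) < 1 / ((j : ℝ) + 1) := by
    intro j
    exact (Metric.tendsto_nhds.mp (hint j) _ (by positivity)).exists
  choose K hKd using hK
  refine ⟨fun j => p j * (n (K j) : ℤ), fun j =>
    mul_ne_zero (hp j) (by exact_mod_cast (hpos (K j)).ne'), ?_⟩
  rw [tendsto_iff_dist_tendsto_zero]
  have hbound : ∀ j : ℕ,
      dist (∫ t : I, Complex.exp
          (-(2 * Real.pi * Complex.I * ((p j * (n (K j) : ℤ) : ℤ) : ℂ) * ((t : ℝ) : ℂ))) ∂μ)
        (β * (M : ℂ)) ≤ (1 + M) * (1 / ((j : ℝ) + 1)) := by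
    intro j
    have h1 := (hKd j).le
    have h2 : dist (c ^ p j * (M : ℂ)) (β * (M : ℂ)) ≤ (1 / ((j : ℝ) + 1)) * M := by
      rw [dist_eq_norm, ← sub_mul, norm_mul]
      have hMn : ‖(M : ℂ)‖ = M := by
        rw [Complex.norm_real, Real.norm_eq_abs, abs_of_nonneg hM0]
      rw [hMn]
      exact mul_le_mul_of_nonneg_right (hpβ j).le hM0
    calc dist _ (β * (M : ℂ)) ≤ _ := dist_triangle _ (c ^ p j * (M : ℂ)) _
      _ ≤ 1 / ((j : ℝ) + 1) + (1 / ((j : ℝ) + 1)) * M := add_le_add h1 h2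
      _ = (1 + M) * (1 / ((j : ℝ) + 1)) := by ring
  refine squeeze_zero (fun j => dist_nonneg) hbound ?_
  have := tendsto_one_div_add_atTop_nhds_zero_nat.const_mul (1 + M)
  simpa using this
end
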